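/- arXiv:2410.19295 — 4 statements merged into one kernel-verified Lean document; each statement's English description precedes it below -/
import Mathlib

section
/- If a graph G is a rank-r-perturbation of a graph G0 (r ≥ 0 an integer), then there exist an integer k ≤ 2^r and a k-colour-perturbation-model (H,ζ) of G0 such that G is the (H,ζ)-perturbed G0. -/
/-! ## Basic graph-theoretic definitions -/

/-- The `(m × n)`-grid: vertices `[m] × [n]`, with `(v₁,v₂)` adjacent to `(u₁,u₂)` iff
`v₁ = u₁` and `|v₂ - u₂| = 1`, or `v₂ = u₂` and `|v₁ - u₁| = 1`. -/
def gridGraph (m n : ℕ) : SimpleGraph (Fin m × Fin n) :=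
  SimpleGraph.fromRel (fun p q =>
    (p.1 = q.1 ∧ p.2.val + 1 = q.2.val) ∨ (p.2 = q.2 ∧ p.1.val + 1 = q.1.val))

/-- `H` is a minor of `G`: there is a family of nonempty, connected, pairwise disjoint
branch sets in `G`, one for each vertex of `H`, with an edge of `G` between the branch sets
of any two adjacent vertices of `H`. -/
def IsMinor {W V : Type} (H : SimpleGraph W) (G : SimpleGraph V) : Prop :=
  ∃ φ : W → Set V,
    (∀ w, (G.induce (φ w)).Connected) ∧
    (∀ w w', w ≠ w' → Disjoint (φ w) (φ w')) ∧
    (∀ w w', H.Adj w w' → ∃ u ∈ φ w, ∃ x ∈ φ w', G.Adj u x)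

/-- `H` is an induced minor of `G`: as for a minor, but additionally two distinct branch
sets are joined by an edge of `G` *exactly* when the corresponding vertices are adjacent
in `H` (this models deleting vertices and contracting edges only). -/
def IsInducedMinor {W V : Type} (H : SimpleGraph W) (G : SimpleGraph V) : Prop :=
  ∃ φ : W → Set V,
    (∀ w, (G.induce (φ w)).Connected) ∧
    (∀ w w', w ≠ w' → Disjoint (φ w) (φ w')) ∧
    (∀ w w', w ≠ w' → (H.Adj w w' ↔ ∃ u ∈ φ w, ∃ x ∈ φ w', G.Adj u x))

/-- The Hadwiger number of `G`: the largest `t` such that `K_t` is a minor of `G`. -/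
noncomputable def hadwigerNumber {V : Type} (G : SimpleGraph V) : ℕ :=
  sSup {t : ℕ | IsMinor (⊤ : SimpleGraph (Fin t)) G}

/-- `(Tr, β)` is a tree-decomposition of `G`. -/
def IsTreeDecomp {V T : Type} (G : SimpleGraph V) (Tr : SimpleGraph T) (β : T → Set V) : Prop :=
  Tr.IsTree ∧
  (∀ ⦃a b : V⦄, G.Adj a b → ∃ t, a ∈ β t ∧ b ∈ β t) ∧
  (∀ a : V, (Tr.induce {t | a ∈ β t}).Connected)

/-- `G` has a tree-decomposition of width at most `k` (all bags of size at most `k+1`). -/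
def TreewidthLE {V : Type} (G : SimpleGraph V) (k : ℕ) : Prop :=
  ∃ (T : Type) (Tr : SimpleGraph T) (β : T → Set V),
    IsTreeDecomp G Tr β ∧ ∀ t, (β t).ncard ≤ k + 1

/-- The treewidth of a (finite) graph. -/
noncomputable def treewidth {V : Type} (G : SimpleGraph V) : ℕ :=
  sInf {k : ℕ | TreewidthLE G k}

/-- A graph is planar iff it has neither a `K₅`- nor a `K₃,₃`-minor (Wagner's theorem). -/
def IsPlanar {V : Type} (G : SimpleGraph V) : Prop :=
  ¬ IsMinor (⊤ : SimpleGraph (Fin 5)) G ∧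
  ¬ IsMinor (completeBipartiteGraph (Fin 3) (Fin 3)) G

/-! ## Separations -/

/-- `(A, B)` is a separation of `G`. -/
def IsSeparation {V : Type} (G : SimpleGraph V) (A B : Set V) : Prop :=
  A ∪ B = Set.univ ∧ ∀ a ∈ A \ B, ∀ b ∈ B \ A, ¬ G.Adj a b

/-- `(A, B)` is `α`-balanced for `X`. -/
def IsBalancedFor {V : Type} (α : ℝ) (X A B : Set V) : Prop :=
  ((X ∩ (A \ B)).ncard : ℝ) ≤ α * (X.ncard : ℝ) ∧
  ((X ∩ (B \ A)).ncard : ℝ) ≤ α * (X.ncard : ℝ)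

/-! ## Local complementation and vertex-minors -/

/-- Local complementation of `G` at `v`: complement the adjacency relation inside the
neighbourhood of `v`. -/
def localComplement {V : Type} (G : SimpleGraph V) (v : V) : SimpleGraph V where
  Adj x y := x ≠ y ∧ (G.Adj x y ↔ ¬ (G.Adj v x ∧ G.Adj v y))
  symm := by
    constructor
    intro x y h
    obtain ⟨hxy, hiff⟩ := h
    refine ⟨hxy.symm, ?_⟩
    constructor
    · intro hyx hc
      exact (hiff.mp hyx.symm) ⟨hc.2, hc.1⟩
    · intro hn
      exact (hiff.mpr (fun hc => hn ⟨hc.2, hc.1⟩)).symm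
  loopless := ⟨fun x h => h.1 rfl⟩

/-- `H` is a vertex-minor of `G`: `H` is isomorphic to a graph obtained from `G` by a
sequence of local complementations and vertex deletions (local complementations commute
with deletions of other vertices, so we may perform all complementations first and then
take an induced subgraph). -/
def IsVertexMinor {W V : Type} (H : SimpleGraph W) (G : SimpleGraph V) : Prop :=
  ∃ (l : List V) (s : Set V),
    Nonempty (H ≃g ((l.foldl localComplement G).induce s))

/-! ## Graph classes (represented on vertex sets `Fin n`) -/

/-- A class of finite graphs, given by its members on the canonical vertex sets `Fin n`. -/
def GraphClass := ∀ ⦃n : ℕ⦄, SimpleGraph (Fin n) → Prop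

/-- A class is hereditary if it is closed under (isomorphic copies of) induced subgraphs. -/
def GraphClass.Hereditary (𝒢 : GraphClass) : Prop :=
  ∀ ⦃n m : ℕ⦄ (G : SimpleGraph (Fin n)) (H : SimpleGraph (Fin m)),
    𝒢 G → (∃ f : Fin m ↪ Fin n, ∀ a b, H.Adj a b ↔ G.Adj (f a) (f b)) → 𝒢 H

/-- A class is `(tw,had)`-bounded if treewidth is bounded by a function of the Hadwiger
number on the class. -/
def GraphClass.TwHadBounded (𝒢 : GraphClass) : Prop :=
  ∃ f : ℕ → ℕ, ∀ ⦃n : ℕ⦄ (G : SimpleGraph (Fin n)), 𝒢 G →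
    treewidth G ≤ f (hadwigerNumber G)

/-- A class is vertex-minor-closed if it contains every vertex-minor of each member. -/
def GraphClass.VertexMinorClosed (𝒢 : GraphClass) : Prop :=
  ∀ ⦃n m : ℕ⦄ (G : SimpleGraph (Fin n)) (H : SimpleGraph (Fin m)),
    𝒢 G → IsVertexMinor H G → 𝒢 H

/-- A class is proper if some graph does not belong to it. -/
def GraphClass.Proper (𝒢 : GraphClass) : Prop :=
  ∃ (n : ℕ) (G : SimpleGraph (Fin n)), ¬ 𝒢 G

/-! ## Ordered graphs -/

/-- An ordered graph `(G, ≤)` is ×-free: whenever edges `uv` and `xy` (with `u < v`,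
`x < y`) cross, at least one of `ux, uy, vx, vy` is an edge. -/
def XFree {V : Type} [LinearOrder V] (G : SimpleGraph V) : Prop :=
  ∀ ⦃u v x y : V⦄, G.Adj u v → G.Adj x y → u < v → x < y →
    ((u < x ∧ x < v ∧ v < y) ∨ (x < u ∧ u < y ∧ y < v)) →
    (G.Adj u x ∨ G.Adj u y ∨ G.Adj v x ∨ G.Adj v y)

/-! ## Outer-string graphs -/

/-- `G` is an outer-string graph: the intersection graph of a family of strings (curves)
in the closed unit disk of the plane, each meeting the boundary circle in exactly one
point, which is an endpoint of the string (its root), with distinct strings having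
distinct roots. -/
def IsOuterStringGraph {V : Type} (G : SimpleGraph V) : Prop :=
  ∃ γ : V → ContinuousMap unitInterval (EuclideanSpace ℝ (Fin 2)),
    (∀ w, Set.range (γ w) ⊆ Metric.closedBall 0 1) ∧
    (∀ w, Set.range (γ w) ∩ Metric.sphere (0 : EuclideanSpace ℝ (Fin 2)) 1 = {γ w 0}) ∧
    (Function.Injective fun w => γ w 0) ∧
    (∀ u w, G.Adj u w ↔ u ≠ w ∧ (Set.range (γ u) ∩ Set.range (γ w)).Nonempty)

/-! ## Cyclic orders, chord diagrams and circle graphs -/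

/-- A cyclic order on `α`: a ternary relation satisfying cyclicity, asymmetry,
transitivity and totality. -/
structure CyclicOrder (α : Type) where
  R : α → α → α → Prop
  cycle : ∀ {a b c}, R a b c → R b c a
  asymm : ∀ {a b c}, R a b c → ¬ R a c b
  trans : ∀ {a b c d}, R a b c → R a c d → R a b d
  total : ∀ {a b c}, a ≠ b → a ≠ c → b ≠ c → R a b c ∨ R a c b

/-- `(a,b,c,d)` occur in this cyclic order. -/
def CyclicOrder.Tuple4 {α : Type} (C : CyclicOrder α) (a b c d : α) : Prop :=
  C.R a b c ∧ C.R a b d ∧ C.R a c d ∧ C.R b c d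

/-- The chords `{p.1, p.2}` and `{q.1, q.2}` cross in the cyclic order `C`. -/
def CyclicOrder.ChordsCross {α : Type} (C : CyclicOrder α) (p q : α × α) : Prop :=
  C.Tuple4 p.1 q.1 p.2 q.2 ∨ C.Tuple4 p.1 q.2 p.2 q.1

/-- `G` is a circle graph: the crossing graph of a chord diagram, i.e. there exist a
cyclic order and an assignment of chords with pairwise distinct endpoints to the vertices
such that adjacency is exactly crossing of chords. -/
def IsCircleGraph {V : Type} (G : SimpleGraph V) : Prop :=
  ∃ (α : Type) (C : CyclicOrder α) (e : V → α × α),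
    Function.Injective (fun x : V × Bool => if x.2 then (e x.1).1 else (e x.1).2) ∧
    (∀ u w, G.Adj u w ↔ u ≠ w ∧ C.ChordsCross (e u) (e w))

/-! ## Colour perturbations and rank perturbations -/

/-- The `(H,ζ)`-perturbation of `G₀`, where `Hrel` is the (symmetric, possibly reflexive)
edge relation of a colour-pattern graph `H` on `Fin k` and `ζ` is a colouring: distinct
vertices `v, w` are adjacent iff exactly one of `G₀.Adj v w` and `Hrel (ζ v) (ζ w)` holds. -/
def perturbedGraph {V : Type} {k : ℕ} (G0 : SimpleGraph V)
    (Hrel : Fin k → Fin k → Prop) (ζ : V → Fin k) : SimpleGraph V :=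
  SimpleGraph.fromRel (fun a b => Xor' (G0.Adj a b) (Hrel (ζ a) (ζ b)))

open scoped Classical in
/-- The adjacency matrix of `G` over `GF(2)`. -/
noncomputable def adjMatGF2 {V : Type} [Fintype V] (G : SimpleGraph V) :
    Matrix V V (ZMod 2) :=
  Matrix.of fun a b => if G.Adj a b then 1 else 0

/-- `G` is a rank-`r`-perturbation of `G₀`: the `GF(2)` adjacency matrix of `G` is
obtained from `A₀ + P`, with `P` symmetric of rank `r`, by zeroing the diagonal. -/
def IsRankPerturbation {V : Type} [Fintype V] (r : ℕ) (G G0 : SimpleGraph V) : Prop :=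
  ∃ P : Matrix V V (ZMod 2), P.IsSymm ∧ P.rank = r ∧
    ∀ a b : V, a ≠ b → adjMatGF2 G a b = adjMatGF2 G0 a b + P a b

/-! ## Subdivisions -/

/-- `S` is a subdivision of `G`, witnessed by the embedding `ι` of branch vertices and the
family `P` of subdivision paths, one for each (oriented) edge of `G`. -/
def IsSubdivisionWith {V W : Type} (G : SimpleGraph V) (S : SimpleGraph W)
    (ι : V ↪ W) (P : ∀ ⦃u v : V⦄, G.Adj u v → S.Walk (ι u) (ι v)) : Prop :=
  (∀ ⦃u v⦄ (h : G.Adj u v), (P h).IsPath) ∧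
  (∀ ⦃u v⦄ (h : G.Adj u v), P h.symm = (P h).reverse) ∧
  (∀ ⦃u v⦄ (h : G.Adj u v) (a : V), ι a ∈ (P h).support → a = u ∨ a = v) ∧
  (∀ ⦃u v⦄ (h : G.Adj u v) ⦃u' v'⦄ (h' : G.Adj u' v'), s(u, v) ≠ s(u', v') →
    ∀ w, w ∈ (P h).support → w ∈ (P h').support → w ∈ Set.range ι) ∧
  (∀ w : W, w ∈ Set.range ι ∨ ∃ (u v : V) (h : G.Adj u v), w ∈ (P h).support) ∧
  (∀ ⦃a b : W⦄, S.Adj a b → ∃ (u v : V) (h : G.Adj u v), s(a, b) ∈ (P h).edges)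

/-- `S` is a subdivision of `G`. -/
def IsSubdivision {V W : Type} (G : SimpleGraph V) (S : SimpleGraph W) : Prop :=
  ∃ (ι : V ↪ W) (P : ∀ ⦃u v : V⦄, G.Adj u v → S.Walk (ι u) (ι v)),
    IsSubdivisionWith G S ι P

/-- `S` is a proper subdivision of `G`: every subdivision path has length at least `2`. -/
def IsProperSubdivision {V W : Type} (G : SimpleGraph V) (S : SimpleGraph W) : Prop :=
  ∃ (ι : V ↪ W) (P : ∀ ⦃u v : V⦄, G.Adj u v → S.Walk (ι u) (ι v)),
    IsSubdivisionWith G S ι P ∧ ∀ ⦃u v⦄ (h : G.Adj u v), 2 ≤ (P h).length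

/-- `S` is the `k`-subdivision of `G`: every subdivision path has length exactly `k + 1`
(i.e. every edge is replaced by a path with exactly `k` internal vertices). -/
def IsKSubdivision {V W : Type} (k : ℕ) (G : SimpleGraph V) (S : SimpleGraph W) : Prop :=
  ∃ (ι : V ↪ W) (P : ∀ ⦃u v : V⦄, G.Adj u v → S.Walk (ι u) (ι v)),
    IsSubdivisionWith G S ι P ∧ ∀ ⦃u v⦄ (h : G.Adj u v), (P h).length = k + 1

/-- If `G` is a rank-`r`-perturbation of `G₀`, then there are `k ≤ 2^r`
and a `k`-colour-perturbation-model `(H,ζ)` of `G₀` such that `G` is the `(H,ζ)`-perturbed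
`G₀`. -/
theorem rank_perturbation_gives_colour_perturbation_model (r : ℕ) {V : Type} [Fintype V]
    (G G0 : SimpleGraph V) (hp : IsRankPerturbation r G G0) :
    ∃ k : ℕ, k ≤ 2 ^ r ∧ ∃ (Hrel : Fin k → Fin k → Prop) (ζ : V → Fin k),
      Symmetric Hrel ∧ G = perturbedGraph G0 Hrel ζ := by
  classical
  obtain ⟨P, hsym, hrk, hPG⟩ := hp
  -- the column space of `P`
  set W := LinearMap.range P.mulVecLin with hWdef
  haveI : Fintype W := Fintype.ofFinite W
  -- each column of `P` lies in `W`
  have hcol : ∀ v : V, (fun u => P u v) ∈ W := by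
    intro v
    refine ⟨Pi.single v 1, ?_⟩
    ext u
    simp [Matrix.mulVecLin_apply]
  let ζ0 : V → W := fun v => ⟨fun u => P u v, hcol v⟩
  have hsym' : ∀ a b : V, P a b = P b a := fun a b => Matrix.IsSymm.apply hsym b a
  -- colour relation on `W`
  let Hrel0 : W → W → Prop := fun c c' => ∃ v w : V, ζ0 v = c ∧ ζ0 w = c' ∧ P v w = 1
  have hkey : ∀ v w : V, Hrel0 (ζ0 v) (ζ0 w) ↔ P v w = 1 := by
    intro v w
    constructor
    · rintro ⟨v', w', hv, hw, h1⟩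
      have hv' : (fun u => P u v') = fun u => P u v := congrArg Subtype.val hv
      have hw' : (fun u => P u w') = fun u => P u w := congrArg Subtype.val hw
      have e1 : P w v' = P w v := congrFun hv' w
      have e2 : P v' w' = P v' w := congrFun hw' v'
      calc P v w = P w v := hsym' v w
        _ = P w v' := e1.symm
        _ = P v' w := hsym' w v'
        _ = P v' w' := e2.symm
        _ = 1 := h1
    · intro h
      exact ⟨v, w, rfl, rfl, h⟩
  have hHrel0symm : ∀ c c', Hrel0 c c' → Hrel0 c' c := by
    rintro c c' ⟨v, w, hv, hw, h1⟩
    exact ⟨w, v, hw, hv, (hsym' w v).trans h1⟩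
  set k := Fintype.card W with hk
  have hkle : k ≤ 2 ^ r := by
    have : Fintype.card W = Fintype.card (ZMod 2) ^ Module.finrank (ZMod 2) W :=
      Module.card_eq_pow_finrank
    rw [hk, this, ZMod.card 2]
    have : Module.finrank (ZMod 2) W = r := hrk
    rw [this]
  let e : W ≃ Fin k := Fintype.equivFin W
  refine ⟨k, hkle, fun i j => Hrel0 (e.symm i) (e.symm j), fun v => e (ζ0 v), ?_, ?_⟩
  · intro i j h
    exact hHrel0symm _ _ h
  · have hkey' : ∀ v w : V,
        (Hrel0 (e.symm (e (ζ0 v))) (e.symm (e (ζ0 w))) ↔ P v w = 1) := by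
      intro v w
      rw [e.symm_apply_apply, e.symm_apply_apply]
      exact hkey v w
    ext a b
    simp only [perturbedGraph, SimpleGraph.fromRel_adj]
    constructor
    · intro hadj
      have hne : a ≠ b := hadj.ne
      refine ⟨hne, Or.inl ?_⟩
      have heq := hPG a b hne
      rw [hkey']
      have h01 : ∀ x : ZMod 2, x = 0 ∨ x = 1 := by decide
      rcases h01 (P a b) with hP | hP <;> by_cases hG0 : G0.Adj a b <;>
        simp [adjMatGF2, hadj, hG0, hP, Xor'] at heq ⊢
    · rintro ⟨hne, hx⟩
      have heq := hPG a b hne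
      have hx' : Xor' (G0.Adj a b) (P a b = 1) := by
        rcases hx with hx | hx
        · rw [hkey'] at hx; exact hx
        · rw [hkey'] at hx
          rcases hx with ⟨h1, h2⟩ | ⟨h1, h2⟩
          · exact Or.inl ⟨h1.symm, fun hc => h2 ((hsym' b a).trans hc)⟩
          · exact Or.inr ⟨(hsym' a b).trans h1, fun hc => h2 hc.symm⟩
      have h01 : ∀ x : ZMod 2, x = 0 ∨ x = 1 := by decide
      by_contra hG
      rcases h01 (P a b) with hP | hP <;> by_cases hG0 : G0.Adj a b <;>
        simp [adjMatGF2, hG, hG0, hP, Xor'] at heq hx'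
end

section
/- Let k ≥ 1 be an integer, let C be a cyclic order on the vertex set of the complete graph K_{4k}, and let (E_1, …, E_k) be a partition of the edge set of K_{4k}. Then there exists i ∈ [k] such that the graph with vertex set V(K_{4k}) and edge set E_i contains both a pair of non-incident edges that cross (with respect to C) and a pair of non-incident edges that do not cross. -/
namespace St12

variable {α : Type} (C : CyclicOrder α)

lemma rot {a b c : α} (h : C.R a b c) : C.R b c a := C.cycle h
lemma rot2 {a b c : α} (h : C.R a b c) : C.R c a b := C.cycle (C.cycle h)

lemma not_aab (a b : α) : ¬ C.R a a b := fun h => C.asymm h (C.cycle h)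
lemma not_aba (a b : α) : ¬ C.R a b a := fun h => C.asymm h (rot2 C h)
lemma not_abb (a b : α) : ¬ C.R a b b := fun h => not_aab C b a (rot C h)

lemma ne12 {a b c : α} (h : C.R a b c) : a ≠ b := fun e => not_aab C a c (e ▸ h)
lemma ne23 {a b c : α} (h : C.R a b c) : b ≠ c := fun e => ne12 C (rot C h) e
lemma ne13 {a b c : α} (h : C.R a b c) : a ≠ c := fun e => (ne12 C (rot2 C h)) e.symm

/-- key: insertion transitivity at a base point -/
lemma sub {p x y z : α} (h1 : C.R p x y) (h2 : C.R p y z) : C.R x y z := by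
  have hxy : x ≠ y := ne23 C h1
  have hyz : y ≠ z := ne23 C h2
  have hxz : x ≠ z := by
    rintro rfl; exact C.asymm h1 (rot C (rot2 C h2))
  rcases C.total hxy hxz hyz with h | h
  · exact h
  · -- h : R x z y
    have h3 : C.R y x z := rot2 C h
    have h4 : C.R y p x := rot C (rot C h1)
    have h5 : C.R y p z := C.trans h4 h3
    exact (C.asymm h2 (rot C h5)).elim

/-- helper for the forward direction: impossible single-true configuration -/
lemma helper {p a b c : α} (habc : C.R a b c) (h1 : C.R p a b) (h3' : C.R p c b)
    (h2' : C.R p a c) : False := by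
  have hc1 : C.R c b p := rot C h3'
  have hc2 : C.R c a b := rot2 C habc
  have hc3 : C.R c a p := C.trans hc2 hc1
  exact C.asymm h2' (rot2 C hc3)

lemma main_case {p a b c : α} (hpa : p ≠ a) (hpb : p ≠ b) (hpc : p ≠ c)
    (hab : a ≠ b) (hac : a ≠ c) (hbc : b ≠ c) :
    C.R a b c ↔ (C.R p a b ∧ C.R p b c) ∨ (C.R p b c ∧ C.R p c a) ∨
      (C.R p c a ∧ C.R p a b) := by
  constructor
  · intro habc
    rcases C.total hpa hpb hab with x1 | x1'
    · rcases C.total hpb hpc hbc with x2 | x2'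
      · exact Or.inl ⟨x1, x2⟩
      · rcases C.total hpc hpa hac.symm with x3 | x3'
        · exact Or.inr (Or.inr ⟨x3, x1⟩)
        · exact (helper C habc x1 x2' x3').elim
    · rcases C.total hpb hpc hbc with x2 | x2'
      · rcases C.total hpc hpa hac.symm with x3 | x3'
        · exact Or.inr (Or.inl ⟨x2, x3⟩)
        · -- only x2 true: R p b c, R p b a (x1'), R p a c (x3')
          exact absurd (helper C (rot C habc) x2 x3' x1') id
      · rcases C.total hpc hpa hac.symm with x3 | x3'
        · -- only x3 true: R p c a, R p c b (x2'), R p b a (x1')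
          exact absurd (helper C (rot2 C habc) x3 x1' x2') id
        · -- all false: R p b a, R p c b, R p a c
          exact absurd (C.trans x2' x1') (C.asymm x3')
  · rintro (⟨h1, h2⟩ | ⟨h1, h2⟩ | ⟨h1, h2⟩)
    · exact sub C h1 h2
    · exact rot2 C (sub C h1 h2)
    · exact rot C (sub C h1 h2)


/-- two chords with endpoints at positions `p.1 < p.2`, `q.1 < q.2` cross -/
def Cross (p q : ℕ × ℕ) : Prop :=
  (p.1 < q.1 ∧ q.1 < p.2 ∧ p.2 < q.2) ∨ (q.1 < p.1 ∧ p.1 < q.2 ∧ q.2 < p.2)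

/-- the four endpoints are distinct -/
def Indep (p q : ℕ × ℕ) : Prop := p.1 ≠ q.1 ∧ p.1 ≠ q.2 ∧ p.2 ≠ q.1 ∧ p.2 ≠ q.2

def EdgesOn (G : Finset ℕ) (S : Finset (ℕ × ℕ)) : Prop :=
  ∀ p ∈ S, p.1 ∈ G ∧ p.2 ∈ G ∧ p.1 < p.2

lemma indep_symm {p q : ℕ × ℕ} (h : Indep p q) : Indep q p :=
  ⟨h.1.symm, h.2.2.1.symm, h.2.1.symm, h.2.2.2.symm⟩

lemma two_case {G : Finset ℕ} {S : Finset (ℕ × ℕ)} (hE : EdgesOn G S) (hG : G.card = 2) :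
    S.card ≤ 1 := by
  obtain ⟨u, v, huv, rfl⟩ := Finset.card_eq_two.mp hG
  have hsub : S ⊆ {(min u v, max u v)} := by
    intro p hp
    obtain ⟨h1, h2, h12⟩ := hE p hp
    simp only [Finset.mem_insert, Finset.mem_singleton] at h1 h2 ⊢
    rw [Prod.ext_iff]
    omega
  calc S.card ≤ ({(min u v, max u v)} : Finset (ℕ × ℕ)).card := Finset.card_le_card hsub
    _ = 1 := Finset.card_singleton _

/-- a family of pairwise non-crossing chords has at most `2|G| - 3` members -/
lemma nc_bound (N : ℕ) : ∀ (G : Finset ℕ) (S : Finset (ℕ × ℕ)), G.card ≤ N →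
    EdgesOn G S → (∀ p ∈ S, ∀ q ∈ S, Indep p q → ¬ Cross p q) → 2 ≤ G.card →
    S.card ≤ 2 * G.card - 3 := by
  induction N using Nat.strong_induction_on with
  | _ N ih =>
  intro G S hN hE hnc hG2
  classical
  by_cases hA : ∃ r ∈ S, (∃ c ∈ G, r.1 < c ∧ c < r.2) ∧ (∃ g ∈ G, g < r.1 ∨ r.2 < g)
  · obtain ⟨r, hrS, ⟨c, hcG, hc1, hc2⟩, ⟨g, hgG, hg⟩⟩ := hA
    obtain ⟨hr1G, hr2G, hr12⟩ := hE r hrS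
    set a := r.1 with ha
    set b := r.2 with hb
    set A : Finset ℕ := G.filter (fun x => a ≤ x ∧ x ≤ b) with hA'
    set B : Finset ℕ := G.filter (fun x => ¬ (a < x ∧ x < b)) with hB'
    set SA : Finset (ℕ × ℕ) := S.filter (fun p => a ≤ p.1 ∧ p.2 ≤ b) with hSA
    set SB : Finset (ℕ × ℕ) :=
      S.filter (fun p => ¬(a < p.1 ∧ p.1 < b) ∧ ¬(a < p.2 ∧ p.2 < b)) with hSB
    have hsplit : S ⊆ SA ∪ SB := by
      intro p hp
      obtain ⟨h1G, h2G, h12⟩ := hE p hp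
      have key : (a ≤ p.1 ∧ p.2 ≤ b) ∨ (¬(a < p.1 ∧ p.1 < b) ∧ ¬(a < p.2 ∧ p.2 < b)) := by
        by_cases hind : Indep p r
        · have h1 := hnc p hp r hrS hind
          have h2 := hnc r hrS p hp (indep_symm hind)
          simp only [Cross, Indep] at h1 h2 hind
          omega
        · simp only [Indep] at hind
          omega
      rcases key with ⟨k1, k2⟩ | ⟨k1, k2⟩
      · exact Finset.mem_union_left _ (Finset.mem_filter.mpr ⟨hp, k1, k2⟩)
      · exact Finset.mem_union_right _ (Finset.mem_filter.mpr ⟨hp, k1, k2⟩)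
    have hEA : EdgesOn A SA := by
      intro p hp
      rw [hSA, Finset.mem_filter] at hp
      obtain ⟨h1G, h2G, h12⟩ := hE p hp.1
      refine ⟨?_, ?_, h12⟩ <;> rw [hA', Finset.mem_filter] <;>
        exact ⟨by assumption, by omega⟩
    have hEB : EdgesOn B SB := by
      intro p hp
      rw [hSB, Finset.mem_filter] at hp
      obtain ⟨h1G, h2G, h12⟩ := hE p hp.1
      refine ⟨?_, ?_, h12⟩ <;> rw [hB', Finset.mem_filter] <;>
        exact ⟨by assumption, by omega⟩
    have hrA : r ∈ SA := Finset.mem_filter.mpr ⟨hrS, le_refl _, le_refl _⟩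
    have hrB : r ∈ SB := Finset.mem_filter.mpr ⟨hrS, by omega, by omega⟩
    have hAunB : A ∪ B = G := by
      ext x
      simp only [Finset.mem_union, hA', hB', Finset.mem_filter]
      constructor
      · rintro (⟨h, _⟩ | ⟨h, _⟩) <;> exact h
      · intro h
        by_cases hx : a ≤ x ∧ x ≤ b
        · exact Or.inl ⟨h, hx⟩
        · exact Or.inr ⟨h, by omega⟩
    have hAinB : A ∩ B = {a, b} := by
      ext x
      simp only [Finset.mem_inter, hA', hB', Finset.mem_filter, Finset.mem_insert,
        Finset.mem_singleton]
      constructor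
      · rintro ⟨⟨_, h1⟩, ⟨_, h2⟩⟩; omega
      · rintro (rfl | rfl)
        · exact ⟨⟨hr1G, by omega⟩, ⟨hr1G, by omega⟩⟩
        · exact ⟨⟨hr2G, by omega⟩, ⟨hr2G, by omega⟩⟩
    have hcardsum : A.card + B.card = G.card + 2 := by
      have h1 := Finset.card_union_add_card_inter A B
      rw [hAunB, hAinB] at h1
      have : ({a, b} : Finset ℕ).card = 2 := by
        rw [Finset.card_insert_of_notMem (by simp; omega), Finset.card_singleton]
      omega
    have hAltG : A.card < G.card := by
      apply Finset.card_lt_card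
      refine ⟨Finset.filter_subset _ _, fun hsub => ?_⟩
      have := hsub hgG
      rw [hA', Finset.mem_filter] at this
      omega
    have hBltG : B.card < G.card := by
      apply Finset.card_lt_card
      refine ⟨Finset.filter_subset _ _, fun hsub => ?_⟩
      have := hsub hcG
      rw [hB', Finset.mem_filter] at this
      omega
    have hA2 : 2 ≤ A.card := by
      have : ({a, b} : Finset ℕ) ⊆ A := by
        rw [← hAinB]; exact Finset.inter_subset_left.trans (le_refl _)
      have h2 := Finset.card_le_card this
      have : ({a, b} : Finset ℕ).card = 2 := by
        rw [Finset.card_insert_of_notMem (by simp; omega), Finset.card_singleton]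
      omega
    have hB2 : 2 ≤ B.card := by
      have : ({a, b} : Finset ℕ) ⊆ B := by
        rw [← hAinB]; exact Finset.inter_subset_right
      have h2 := Finset.card_le_card this
      have : ({a, b} : Finset ℕ).card = 2 := by
        rw [Finset.card_insert_of_notMem (by simp; omega), Finset.card_singleton]
      omega
    have hSAb : SA.card ≤ 2 * A.card - 3 :=
      ih A.card (by omega) A SA (le_refl _) hEA
        (fun p hp q hq hi => hnc p (Finset.filter_subset _ _ hp) q (Finset.filter_subset _ _ hq) hi)
        hA2
    have hSBb : SB.card ≤ 2 * B.card - 3 :=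
      ih B.card (by omega) B SB (le_refl _) hEB
        (fun p hp q hq hi => hnc p (Finset.filter_subset _ _ hp) q (Finset.filter_subset _ _ hq) hi)
        hB2
    have hScard : S.card ≤ (SA ∪ SB).card := Finset.card_le_card hsplit
    have hunion := Finset.card_union_add_card_inter SA SB
    have hinter : 1 ≤ (SA ∩ SB).card :=
      Finset.card_pos.mpr ⟨r, Finset.mem_inter.mpr ⟨hrA, hrB⟩⟩
    omega
  · -- no splitting edge
    push_neg at hA
    set S' : Finset (ℕ × ℕ) := S.filter (fun p => ∀ c ∈ G, ¬(p.1 < c ∧ c < p.2)) with hS'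
    have hG0 : G.Nonempty := Finset.card_pos.mp (by omega)
    set m := G.min' hG0 with hm
    set M := G.max' hG0 with hM
    have hS'card : S'.card ≤ G.card - 1 := by
      have : S'.card ≤ (G.erase M).card := by
        apply Finset.card_le_card_of_injOn (fun p => p.1)
        · intro p hp
          rw [hS', Finset.mem_coe, Finset.mem_filter] at hp
          obtain ⟨h1G, h2G, h12⟩ := hE p hp.1
          rw [Finset.mem_coe, Finset.mem_erase]
          refine ⟨?_, h1G⟩
          have := Finset.le_max' G p.2 h2G
          beta_reduce
          omega
        · intro p hp q hq hpq
          simp only [hS', Finset.mem_coe, Finset.mem_filter] at hp hq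
          obtain ⟨hp1, hp2, hp12⟩ := hE p hp.1
          obtain ⟨hq1, hq2, hq12⟩ := hE q hq.1
          have e : p.1 = q.1 := hpq
          rcases lt_trichotomy p.2 q.2 with h | h | h
          · exact absurd ⟨by omega, h⟩ (hq.2 p.2 hp2)
          · exact Prod.ext e h
          · exact absurd ⟨by omega, h⟩ (hp.2 q.2 hq2)
      have : (G.erase M).card = G.card - 1 := by
        rw [Finset.card_erase_of_mem (G.max'_mem hG0)]
      omega
    have hrest : ∀ p ∈ S \ S', p = (m, M) ∧ 3 ≤ G.card := by
      intro p hp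
      rw [Finset.mem_sdiff] at hp
      obtain ⟨hpS, hpne⟩ := hp
      rw [hS', Finset.mem_filter] at hpne
      push_neg at hpne
      obtain ⟨c, hcG, hc1, hc2⟩ := hpne hpS
      have hout := hA p hpS ⟨c, hcG, by omega⟩
      obtain ⟨h1G, h2G, h12⟩ := hE p hpS
      have hm1 := hout m (G.min'_mem hG0)
      have hm2 := hout M (G.max'_mem hG0)
      have hle1 := G.min'_le p.1 h1G
      have hle2 := G.le_max' p.2 h2G
      have h1 : p.1 = m := by omega
      have h2 : p.2 = M := by omega
      refine ⟨Prod.ext h1 h2, ?_⟩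
      have hsub : ({p.1, c, p.2} : Finset ℕ) ⊆ G := by
        intro x hx
        simp only [Finset.mem_insert, Finset.mem_singleton] at hx
        rcases hx with rfl | rfl | rfl <;> assumption
      have hcard : ({p.1, c, p.2} : Finset ℕ).card = 3 := by
        rw [Finset.card_insert_of_notMem (by simp; omega),
          Finset.card_insert_of_notMem (by simp; omega), Finset.card_singleton]
      have := Finset.card_le_card hsub
      omega
    have hSle : S.card ≤ (S \ S').card + S'.card := Finset.card_le_card_sdiff_add_card
    by_cases hne : (S \ S').Nonempty
    · obtain ⟨p, hp⟩ := hne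
      obtain ⟨hpM, hG3⟩ := hrest p hp
      have : S \ S' ⊆ {(m, M)} := by
        intro q hq
        rw [Finset.mem_singleton]
        exact (hrest q hq).1
      have hc1 : (S \ S').card ≤ 1 := by
        have := Finset.card_le_card this
        simpa using this
      omega
    · rw [Finset.not_nonempty_iff_eq_empty] at hne
      rw [hne] at hSle
      simp only [Finset.card_empty] at hSle
      omega

/-- a family of chords, every two independent ones crossing, has at most `2|G| - 3` members -/
lemma ac_bound (N : ℕ) : ∀ (G : Finset ℕ) (S : Finset (ℕ × ℕ)), G.card ≤ N →
    EdgesOn G S → (∀ p ∈ S, ∀ q ∈ S, Indep p q → Cross p q) → 2 ≤ G.card →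
    S.card ≤ 2 * G.card - 3 := by
  induction N using Nat.strong_induction_on with
  | _ N ih =>
  intro G S hN hE hac hG2
  classical
  rcases eq_or_lt_of_le hG2 with hG2' | hG3
  · have := two_case hE hG2'.symm
    omega
  -- now 3 ≤ G.card
  by_cases hdeg : ∃ v ∈ G, (S.filter (fun p => p.1 = v ∨ p.2 = v)).card ≤ 2
  · obtain ⟨v, hvG, hv⟩ := hdeg
    set S' : Finset (ℕ × ℕ) := S.filter (fun p => ¬(p.1 = v ∨ p.2 = v)) with hS'
    have hcard : S'.card + (S.filter (fun p => p.1 = v ∨ p.2 = v)).card = S.card := by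
      rw [hS', add_comm]
      exact Finset.card_filter_add_card_filter_not _
    have hE' : EdgesOn (G.erase v) S' := by
      intro p hp
      rw [hS', Finset.mem_filter] at hp
      obtain ⟨h1G, h2G, h12⟩ := hE p hp.1
      have := hp.2
      push_neg at this
      exact ⟨Finset.mem_erase.mpr ⟨this.1, h1G⟩, Finset.mem_erase.mpr ⟨this.2, h2G⟩, h12⟩
    have hGe : (G.erase v).card = G.card - 1 := Finset.card_erase_of_mem hvG
    have hS'b : S'.card ≤ 2 * (G.erase v).card - 3 :=
      ih (G.erase v).card (by omega) _ S' (le_refl _) hE'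
        (fun p hp q hq hi => hac p (Finset.filter_subset _ _ hp) q (Finset.filter_subset _ _ hq) hi)
        (by omega)
    omega
  · -- all degrees ≥ 3 : contradiction
    exfalso
    push_neg at hdeg
    have hG0 : G.Nonempty := Finset.card_pos.mp (by omega)
    set a := G.min' hG0 with haa
    have haG : a ∈ G := G.min'_mem hG0
    have hdega := hdeg a haG
    -- edges at a have first coordinate a
    have hfa : S.filter (fun p => p.1 = a ∨ p.2 = a) = S.filter (fun p => p.1 = a) := by
      apply Finset.filter_congr
      intro p hp
      obtain ⟨h1G, h2G, h12⟩ := hE p hp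
      have := G.min'_le p.1 h1G
      constructor
      · rintro (h | h)
        · exact h
        · omega
      · exact Or.inl
    set Na : Finset ℕ := (S.filter (fun p => p.1 = a)).image Prod.snd with hNa
    have hNacard : 3 ≤ Na.card := by
      rw [hNa, Finset.card_image_of_injOn]
      · rw [← hfa]; omega
      · intro p hp q hq hpq
        simp only [Finset.mem_coe, Finset.mem_filter] at hp hq
        exact Prod.ext (hp.2.trans hq.2.symm) hpq
    have hNamem : ∀ y ∈ Na, (a, y) ∈ S ∧ a < y ∧ y ∈ G := by
      intro y hy
      rw [hNa, Finset.mem_image] at hy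
      obtain ⟨p, hp, hpy⟩ := hy
      rw [Finset.mem_filter] at hp
      have hpeq : p = (a, y) := Prod.ext hp.2 hpy
      obtain ⟨h1G, h2G, h12⟩ := hE p hp.1
      rw [hpeq] at hp h12 h2G
      exact ⟨hp.1, h12, h2G⟩
    -- pick the three smallest neighbours of a
    have hNa0 : Na.Nonempty := Finset.card_pos.mp (by omega)
    set y1 := Na.min' hNa0 with hy1
    have hy1Na : y1 ∈ Na := Na.min'_mem hNa0
    have hN2 : (Na.erase y1).Nonempty := by
      rw [← Finset.card_pos, Finset.card_erase_of_mem hy1Na]; omega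
    set y2 := (Na.erase y1).min' hN2 with hy2
    have hy2e : y2 ∈ Na.erase y1 := (Na.erase y1).min'_mem hN2
    have hy2Na : y2 ∈ Na := Finset.mem_of_mem_erase hy2e
    have hN3 : ((Na.erase y1).erase y2).Nonempty := by
      rw [← Finset.card_pos, Finset.card_erase_of_mem hy2e,
        Finset.card_erase_of_mem hy1Na]
      omega
    set y3 := ((Na.erase y1).erase y2).min' hN3 with hy3
    have hy3e : y3 ∈ (Na.erase y1).erase y2 := ((Na.erase y1).erase y2).min'_mem hN3
    have hy3Na : y3 ∈ Na := Finset.mem_of_mem_erase (Finset.mem_of_mem_erase hy3e)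
    have hy12 : y1 < y2 := by
      have h1 := Na.min'_le y2 hy2Na
      have h2 := (Finset.mem_erase.mp hy2e).1
      omega
    have hy23 : y2 < y3 := by
      have h1 := (Na.erase y1).min'_le y3 (Finset.mem_of_mem_erase hy3e)
      have h2 := (Finset.mem_erase.mp hy3e).1
      omega
    obtain ⟨hay1S, hay1, hy1G⟩ := hNamem y1 hy1Na
    obtain ⟨hay2S, hay2, hy2G⟩ := hNamem y2 hy2Na
    obtain ⟨hay3S, hay3, hy3G⟩ := hNamem y3 hy3Na
    -- every edge with endpoint y2 is (a, y2)
    have hkey : ∀ e ∈ S, (e.1 = y2 ∨ e.2 = y2) → e = (a, y2) := by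
      intro e heS hey
      obtain ⟨he1G, he2G, he12⟩ := hE e heS
      by_cases he1a : e.1 = a
      · have : e.2 = y2 := by omega
        exact Prod.ext he1a this
      · exfalso
        have he1gt : a < e.1 := by
          have := G.min'_le e.1 he1G
          omega
        have hcr : ∀ y ∈ Na, y ≠ e.1 → y ≠ e.2 → e.1 < y ∧ y < e.2 := by
          intro y hyNa hne1 hne2
          obtain ⟨hayS, hay, hyG⟩ := hNamem y hyNa
          have hi : Indep (a, y) e := ⟨by omega, by omega, hne1, hne2⟩
          have := hac (a, y) hayS e heS hi
          simp only [Cross] at this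
          omega
        rcases hey with h | h
        · have := hcr y1 hy1Na (by omega) (by omega)
          omega
        · have := hcr y3 hy3Na (by omega) (by omega)
          omega
    have hsub : S.filter (fun p => p.1 = y2 ∨ p.2 = y2) ⊆ {(a, y2)} := by
      intro e he
      rw [Finset.mem_filter] at he
      rw [Finset.mem_singleton]
      exact hkey e he.1 he.2
    have hle := Finset.card_le_card hsub
    rw [Finset.card_singleton] at hle
    have := hdeg y2 hy2G
    omega


section Pairing
variable {α : Type} (f : α → ℕ)

def toPair (e : Sym2 α) : ℕ × ℕ :=
  Sym2.lift ⟨fun u v => (min (f u) (f v), max (f u) (f v)),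
    fun u v => by simp [min_comm, max_comm]⟩ e

lemma toPair_mk (u v : α) : toPair f s(u, v) = (min (f u) (f v), max (f u) (f v)) := rfl

lemma toPair_repr (finj : Function.Injective f) (e : Sym2 α) (hne : ¬ e.IsDiag) :
    ∃ u v, e = s(u, v) ∧ f u < f v ∧ toPair f e = (f u, f v) := by
  induction e with
  | _ a b =>
    rw [Sym2.isDiag_iff_proj_eq] at hne
    have hfab : f a ≠ f b := fun h => hne (finj h)
    rcases lt_or_gt_of_ne hfab with h | h
    · exact ⟨a, b, rfl, h, by rw [toPair_mk]; congr 1 <;> omega⟩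
    · exact ⟨b, a, Sym2.eq_swap, h, by rw [toPair_mk]; congr 1 <;> omega⟩

lemma toPair_injOn (finj : Function.Injective f) {e₁ e₂ : Sym2 α}
    (h1 : ¬ e₁.IsDiag) (h2 : ¬ e₂.IsDiag) (h : toPair f e₁ = toPair f e₂) : e₁ = e₂ := by
  obtain ⟨u, v, rfl, huv, hp1⟩ := toPair_repr f finj e₁ h1
  obtain ⟨x, y, rfl, hxy, hp2⟩ := toPair_repr f finj e₂ h2
  rw [hp1, hp2, Prod.ext_iff] at h
  rw [finj h.1, finj h.2]

end Pairing

/-! ### Linearization -/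

section Linearize
variable {α : Type} [Fintype α] [DecidableEq α] (C : CyclicOrder α) (p : α)

/-- `a` comes strictly before `b` when the circle is cut just before basepoint `p`. -/
def Lt (a b : α) : Prop := (a = p ∧ b ≠ p) ∨ (a ≠ p ∧ b ≠ p ∧ C.R p a b)

omit [Fintype α] [DecidableEq α] in
lemma lt_irrefl (a : α) : ¬ Lt C p a a := by
  rintro (⟨h1, h2⟩ | ⟨h1, h2, h3⟩)
  · exact h2 h1
  · exact not_abb C p a h3

omit [Fintype α] [DecidableEq α] in
lemma lt_trans' {a b c : α} (h1 : Lt C p a b) (h2 : Lt C p b c) : Lt C p a c := by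
  rcases h1 with ⟨rfl, hb⟩ | ⟨ha, hb, hab⟩
  · rcases h2 with ⟨h, _⟩ | ⟨_, hc, _⟩
    · exact absurd h hb
    · exact Or.inl ⟨rfl, hc⟩
  · rcases h2 with ⟨rfl, _⟩ | ⟨_, hc, hbc⟩
    · exact absurd rfl hb
    · exact Or.inr ⟨ha, hc, C.trans hab hbc⟩

omit [Fintype α] [DecidableEq α] in
lemma lt_total {a b : α} (h : a ≠ b) : Lt C p a b ∨ Lt C p b a := by
  by_cases hap : a = p
  · subst hap; exact Or.inl (Or.inl ⟨rfl, fun e => h e.symm⟩)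
  · by_cases hbp : b = p
    · subst hbp; exact Or.inr (Or.inl ⟨rfl, hap⟩)
    · rcases C.total (Ne.symm hap) (Ne.symm hbp) h with hr | hr
      · exact Or.inl (Or.inr ⟨hap, hbp, hr⟩)
      · exact Or.inr (Or.inr ⟨hbp, hap, hr⟩)

open scoped Classical in
/-- rank of `a` in the linear order. -/
noncomputable def pos (a : α) : ℕ := (Finset.univ.filter (fun b => Lt C p b a)).card

lemma pos_lt_pos {a b : α} (h : Lt C p a b) : pos C p a < pos C p b := by
  classical
  apply Finset.card_lt_card
  constructor
  · intro c hc
    simp only [Finset.mem_filter, Finset.mem_univ, true_and] at *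
    exact lt_trans' C p hc h
  · intro hsub
    have ha : a ∈ Finset.univ.filter (fun c => Lt C p c b) := by
      simp only [Finset.mem_filter, Finset.mem_univ, true_and]; exact h
    have := hsub ha
    simp only [Finset.mem_filter, Finset.mem_univ, true_and] at this
    exact lt_irrefl C p a this

lemma lt_iff_pos {a b : α} (h : a ≠ b) : Lt C p a b ↔ pos C p a < pos C p b := by
  constructor
  · exact pos_lt_pos C p
  · intro hp
    rcases lt_total C p h with h1 | h1
    · exact h1
    · exact absurd (pos_lt_pos C p h1) (by omega)

lemma pos_inj {a b : α} (h : pos C p a = pos C p b) : a = b := by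
  by_contra hne
  rcases lt_total C p hne with h1 | h1 <;> exact absurd (pos_lt_pos C p h1) (by omega)

/-- cyclic betweenness of ranks -/
def Cyc3 (x y z : ℕ) : Prop := (x < y ∧ y < z) ∨ (y < z ∧ z < x) ∨ (z < x ∧ x < y)

omit [Fintype α] [DecidableEq α] in
lemma R_iff_lt {a b c : α} (hab : a ≠ b) (hac : a ≠ c) (hbc : b ≠ c) :
    C.R a b c ↔ (Lt C p a b ∧ Lt C p b c) ∨ (Lt C p b c ∧ Lt C p c a) ∨
      (Lt C p c a ∧ Lt C p a b) := by
  have lt_p : ∀ x : α, ¬ Lt C p x p := by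
    rintro x (⟨_, h⟩ | ⟨_, h, _⟩) <;> exact h rfl
  have p_lt : ∀ x : α, x ≠ p → Lt C p p x := fun x hx => Or.inl ⟨rfl, hx⟩
  have lt_iff : ∀ x y : α, x ≠ p → y ≠ p → (Lt C p x y ↔ C.R p x y) := by
    intro x y hx hy
    constructor
    · rintro (⟨h, _⟩ | ⟨_, _, h⟩); exact absurd h hx; exact h
    · intro h; exact Or.inr ⟨hx, hy, h⟩
  by_cases ha : a = p
  · have hb : b ≠ p := fun h => hab (ha.trans h.symm)
    have hc : c ≠ p := fun h => hac (ha.trans h.symm)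
    rw [ha, lt_iff b c hb hc]
    constructor
    · intro h; exact Or.inl ⟨p_lt b hb, h⟩
    · rintro (⟨_, h⟩ | ⟨_, hcp⟩ | ⟨hcp, _⟩)
      · exact h
      · exact absurd hcp (lt_p c)
      · exact absurd hcp (lt_p c)
  · by_cases hb : b = p
    · have hc : c ≠ p := fun h => hbc (hb.trans h.symm)
      rw [hb, lt_iff c a hc ha]
      constructor
      · intro h; exact Or.inr (Or.inl ⟨p_lt c hc, rot C h⟩)
      · rintro (⟨hap, _⟩ | ⟨_, h⟩ | ⟨_, hap⟩)
        · exact absurd hap (lt_p a)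
        · exact rot2 C h
        · exact absurd hap (lt_p a)
    · by_cases hc : c = p
      · rw [hc, lt_iff a b ha hb]
        constructor
        · intro h; exact Or.inr (Or.inr ⟨p_lt a ha, rot2 C h⟩)
        · rintro (⟨_, hbp⟩ | ⟨hbp, _⟩ | ⟨_, h⟩)
          · exact absurd hbp (lt_p b)
          · exact absurd hbp (lt_p b)
          · exact rot C h
      · rw [lt_iff a b ha hb, lt_iff b c hb hc, lt_iff c a hc ha]
        exact main_case C (Ne.symm ha) (Ne.symm hb) (Ne.symm hc) hab hac hbc

lemma R_iff_cyc3 {a b c : α} (hab : a ≠ b) (hac : a ≠ c) (hbc : b ≠ c) :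
    C.R a b c ↔ Cyc3 (pos C p a) (pos C p b) (pos C p c) := by
  rw [R_iff_lt C p hab hac hbc, Cyc3,
    lt_iff_pos C p hab, lt_iff_pos C p hbc, lt_iff_pos C p hac.symm]

end Linearize

section Bridge
variable {α : Type} [Fintype α] [DecidableEq α] (C : CyclicOrder α) (p : α)

lemma chordsCross_iff {u v x y : α}
    (hux : u ≠ x) (huy : u ≠ y) (hvx : v ≠ x) (hvy : v ≠ y)
    (huv : pos C p u < pos C p v) (hxy : pos C p x < pos C p y) :
    C.ChordsCross (u, v) (x, y) ↔
      Cross (pos C p u, pos C p v) (pos C p x, pos C p y) := by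
  have huv' : u ≠ v := fun h => absurd (congrArg (pos C p) h) (by omega)
  have hxy' : x ≠ y := fun h => absurd (congrArg (pos C p) h) (by omega)
  show (C.Tuple4 u x v y ∨ C.Tuple4 u y v x) ↔ _
  unfold CyclicOrder.Tuple4
  rw [R_iff_cyc3 C p hux huv' hvx.symm,
      R_iff_cyc3 C p hux huy hxy',
      R_iff_cyc3 C p huv' huy hvy,
      R_iff_cyc3 C p hvx.symm hxy' hvy,
      R_iff_cyc3 C p huy huv' hvy.symm,
      R_iff_cyc3 C p huy hux hxy'.symm,
      R_iff_cyc3 C p huv' hux hvx,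
      R_iff_cyc3 C p hvy.symm hxy'.symm hvx]
  simp only [Cyc3, Cross]
  omega

end Bridge


end St12

/-- Let `k ≥ 1`, let `C` be a cyclic order on the vertex set of
`K_{4k}`, and let `(E_1, …, E_k)` be a partition of the edge set of `K_{4k}`. Then some
part `E_i` contains both a pair of non-incident edges that cross and a pair of
non-incident edges that do not cross. -/
theorem goodColour_exists (k : ℕ) (hk : 1 ≤ k) (C : CyclicOrder (Fin (4 * k)))
    (E : Fin k → Set (Sym2 (Fin (4 * k))))
    (hsub : ∀ i, E i ⊆ (⊤ : SimpleGraph (Fin (4 * k))).edgeSet)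
    (hcover : ∀ e ∈ (⊤ : SimpleGraph (Fin (4 * k))).edgeSet, ∃ i, e ∈ E i)
    (hdisj : ∀ i j, i ≠ j → Disjoint (E i) (E j)) :
    ∃ i : Fin k,
      (∃ u v x y : Fin (4 * k), u ≠ x ∧ u ≠ y ∧ v ≠ x ∧ v ≠ y ∧
        s(u, v) ∈ E i ∧ s(x, y) ∈ E i ∧ C.ChordsCross (u, v) (x, y)) ∧
      (∃ u v x y : Fin (4 * k), u ≠ x ∧ u ≠ y ∧ v ≠ x ∧ v ≠ y ∧
        s(u, v) ∈ E i ∧ s(x, y) ∈ E i ∧ ¬ C.ChordsCross (u, v) (x, y)) := by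
  classical
  have hn : 0 < 4 * k := by omega
  set p : Fin (4 * k) := ⟨0, hn⟩ with hp
  have finj : Function.Injective (St12.pos C p) := fun a b h => St12.pos_inj C p h
  set G : Finset ℕ := Finset.univ.image (St12.pos C p) with hG
  have hGcard : G.card = 4 * k := by
    rw [hG, Finset.card_image_of_injective _ finj, Finset.card_univ, Fintype.card_fin]
  have hnd : ∀ i, ∀ e ∈ E i, ¬ e.IsDiag := by
    intro i e he
    have := hsub i he
    rwa [SimpleGraph.edgeSet_top, Set.mem_compl_iff, Sym2.mem_diagSet] at this
  have hbig : ∃ i, 8 * k - 2 ≤ ((E i).toFinset).card := by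
    by_contra hc
    push_neg at hc
    have hsub2 : (⊤ : SimpleGraph (Fin (4 * k))).edgeFinset ⊆
        Finset.univ.biUnion (fun i => (E i).toFinset) := by
      intro e he
      rw [SimpleGraph.mem_edgeFinset] at he
      obtain ⟨i, hi⟩ := hcover e he
      exact Finset.mem_biUnion.mpr ⟨i, Finset.mem_univ i, Set.mem_toFinset.mpr hi⟩
    have h1 : (⊤ : SimpleGraph (Fin (4 * k))).edgeFinset.card ≤
        ∑ i : Fin k, ((E i).toFinset).card :=
      (Finset.card_le_card hsub2).trans Finset.card_biUnion_le
    have h2 : ∑ i : Fin k, ((E i).toFinset).card ≤ k * (8 * k - 3) := by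
      calc ∑ i : Fin k, ((E i).toFinset).card ≤ ∑ _i : Fin k, (8 * k - 3) :=
            Finset.sum_le_sum (fun j _ => by have := hc j; omega)
        _ = k * (8 * k - 3) := by
            rw [Finset.sum_const, Finset.card_univ, Fintype.card_fin, smul_eq_mul]
    have h3 : (⊤ : SimpleGraph (Fin (4 * k))).edgeFinset.card = (4 * k) * (4 * k - 1) / 2 := by
      rw [SimpleGraph.card_edgeFinset_top_eq_card_choose_two, Fintype.card_fin,
        Nat.choose_two_right]
    have hP : k * (8 * k - 3) + k * 3 = 8 * (k * k) := by
      rw [← Nat.mul_add, Nat.sub_add_cancel (by omega : 3 ≤ 8 * k)]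
      ring
    have hQ : (4 * k) * (4 * k - 1) + 4 * k = 16 * (k * k) := by
      have h5 : (4 * k) * (4 * k - 1) + (4 * k) * 1 = (4 * k) * ((4 * k - 1) + 1) := by
        rw [Nat.mul_add]
      have h6 : (4 * k - 1) + 1 = 4 * k := by omega
      rw [mul_one] at h5
      rw [h5, h6]
      ring
    omega
  obtain ⟨i, hi⟩ := hbig
  set S : Finset (ℕ × ℕ) := ((E i).toFinset).image (St12.toPair (St12.pos C p)) with hS
  have hScard : S.card = ((E i).toFinset).card := by
    rw [hS]
    apply Finset.card_image_of_injOn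
    intro e1 h1 e2 h2 h
    exact St12.toPair_injOn _ finj (hnd i e1 (Set.mem_toFinset.mp h1))
      (hnd i e2 (Set.mem_toFinset.mp h2)) h
  have hEdges : St12.EdgesOn G S := by
    intro q hq
    rw [hS, Finset.mem_image] at hq
    obtain ⟨e, he, rfl⟩ := hq
    obtain ⟨u, v, rfl, huv, hq⟩ :=
      St12.toPair_repr _ finj e (hnd i e (Set.mem_toFinset.mp he))
    rw [hq]
    exact ⟨Finset.mem_image_of_mem _ (Finset.mem_univ u),
      Finset.mem_image_of_mem _ (Finset.mem_univ v), huv⟩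
  have hrepr : ∀ q ∈ S, ∃ u v : Fin (4 * k), s(u, v) ∈ E i ∧
      St12.pos C p u < St12.pos C p v ∧ q = (St12.pos C p u, St12.pos C p v) := by
    intro q hq
    rw [hS, Finset.mem_image] at hq
    obtain ⟨e, he, rfl⟩ := hq
    obtain ⟨u, v, rfl, huv, hq⟩ :=
      St12.toPair_repr _ finj e (hnd i e (Set.mem_toFinset.mp he))
    exact ⟨u, v, Set.mem_toFinset.mp he, huv, hq⟩
  refine ⟨i, ?_, ?_⟩
  · by_contra hno
    push_neg at hno
    have hnc : ∀ p1 ∈ S, ∀ q1 ∈ S, St12.Indep p1 q1 → ¬ St12.Cross p1 q1 := by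
      intro p1 h1 q1 h2 hind
      obtain ⟨u, v, huvE, huv, rfl⟩ := hrepr p1 h1
      obtain ⟨x, y, hxyE, hxy, rfl⟩ := hrepr q1 h2
      obtain ⟨d1, d2, d3, d4⟩ := hind
      have hux : u ≠ x := fun h => d1 (by simp [h])
      have huy : u ≠ y := fun h => d2 (by simp [h])
      have hvx : v ≠ x := fun h => d3 (by simp [h])
      have hvy : v ≠ y := fun h => d4 (by simp [h])
      rw [← St12.chordsCross_iff C p hux huy hvx hvy huv hxy]
      exact hno u v x y hux huy hvx hvy huvE hxyE
    have := St12.nc_bound G.card G S (le_refl _) hEdges hnc (by omega)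
    omega
  · by_contra hno
    push_neg at hno
    have hac : ∀ p1 ∈ S, ∀ q1 ∈ S, St12.Indep p1 q1 → St12.Cross p1 q1 := by
      intro p1 h1 q1 h2 hind
      obtain ⟨u, v, huvE, huv, rfl⟩ := hrepr p1 h1
      obtain ⟨x, y, hxyE, hxy, rfl⟩ := hrepr q1 h2
      obtain ⟨d1, d2, d3, d4⟩ := hind
      have hux : u ≠ x := fun h => d1 (by simp [h])
      have huy : u ≠ y := fun h => d2 (by simp [h])
      have hvx : v ≠ x := fun h => d3 (by simp [h])
      have hvy : v ≠ y := fun h => d4 (by simp [h])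
      rw [← St12.chordsCross_iff C p hux huy hvx hvy huv hxy]
      exact hno u v x y hux huy hvx hvy huvE hxyE
    have := St12.ac_bound G.card G S (le_refl _) hEdges hac (by omega)
    omega
end

section
/- Let k ≥ 1, c ≥ 2, and q ≥ ck+1 be integers, and let α = (c−1)/c. If G is a graph such that for every set X ⊆ V(G) of size exactly q, G has a separation of order at most k that is α-balanced for X, then tw(G) ≤ q + k − 1. -/
/-! ### Auxiliary development for Statement 14 -/


/-- Graph given by parent pointers. -/
@[reducible]
def ptree {T : Type} (f : T → T) : SimpleGraph T where
  Adj x y := x ≠ y ∧ (f x = y ∨ f y = x)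
  symm := by constructor; rintro x y ⟨h, h2⟩; exact ⟨h.symm, h2.symm⟩
  loopless := ⟨fun x h => h.1 rfl⟩

variable {T : Type} {f : T → T} {r : T} {d : T → ℕ}

lemma ptree_d_mono (hr : f r = r) (hd : ∀ t, t ≠ r → d (f t) < d t) (t : T) : d (f t) ≤ d t := by
  by_cases h : t = r
  · subst h; rw [hr]
  · exact (hd t h).le

lemma ptree_d_iter (hr : f r = r) (hd : ∀ t, t ≠ r → d (f t) < d t) (n : ℕ) (t : T) :
    d (f^[n] t) ≤ d t := by
  induction n with
  | zero => simp
  | succ n ih =>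
    rw [Function.iterate_succ_apply']
    exact (ptree_d_mono hr hd _).trans ih

lemma ptree_reach (hr : f r = r) (hd : ∀ t, t ≠ r → d (f t) < d t) (t : T) :
    (ptree f).Reachable t r := by
  by_cases h : t = r
  · subst h; rfl
  · have h1 : d (f t) < d t := hd t h
    have h2 : f t ≠ t := by intro he; rw [he] at h1; omega
    have := ptree_reach hr hd (f t)
    exact ((show (ptree f).Adj t (f t) from ⟨Ne.symm h2, Or.inl rfl⟩).reachable).trans this
termination_by d t
decreasing_by exact hd t h

lemma ptree_connected (hr : f r = r) (hd : ∀ t, t ≠ r → d (f t) < d t) :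
    (ptree f).Connected := by
  rw [SimpleGraph.connected_iff]
  exact ⟨fun a b => (ptree_reach hr hd a).trans (ptree_reach hr hd b).symm, ⟨r⟩⟩

lemma ptree_isTree (hr : f r = r) (hd : ∀ t, t ≠ r → d (f t) < d t) :
    (ptree f).IsTree := by
  refine ⟨ptree_connected hr hd, ?_⟩
  rw [SimpleGraph.isAcyclic_iff_forall_adj_isBridge]
  -- first prove it for edges of the form (f t, t)? do wlog: Adj x y means f x = y or f y = x.
  have key : ∀ t : T, t ≠ f t → (ptree f).IsBridge s(t, f t) := by
    intro t hne
    rw [SimpleGraph.isBridge_iff]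
    show ¬ _
    intro hreach
    -- descendants of t
    set D : Set T := {x | ∃ n, f^[n] x = t} with hD
    have htD : t ∈ D := ⟨0, rfl⟩
    have hftD : f t ∉ D := by
      rintro ⟨n, hn⟩
      have htr : t ≠ r := by intro he; rw [he, hr] at hne; exact hne rfl
      have h1 : d (f^[n] (f t)) ≤ d (f t) := ptree_d_iter hr hd n (f t)
      rw [hn] at h1
      have := hd t htr
      omega
    obtain ⟨p⟩ := hreach
    obtain ⟨dart, hdart, h1, h2⟩ := p.exists_boundary_dart D htD hftD
    have hadj := dart.adj
    obtain ⟨⟨hne', hor⟩, hnotedge⟩ := hadj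
    simp only [SimpleGraph.fromEdgeSet_adj, Set.mem_singleton_iff] at hnotedge
    push_neg at hnotedge
    obtain ⟨n, hn⟩ := h1
    rcases hor with h | h
    · -- f dart.fst = dart.snd
      rcases n with _ | m
      · -- dart.fst = t, so dart.snd = f t : the deleted edge
        simp only [Function.iterate_zero, id] at hn
        exact hne' (hnotedge (by rw [hn, ← h, hn]))
      · have : f^[m] dart.snd = t := by
          rw [← h, ← Function.iterate_succ_apply]
          exact hn
        exact h2 ⟨m, this⟩
    · -- f dart.snd = dart.fst
      refine h2 ⟨n + 1, ?_⟩
      rw [Function.iterate_succ_apply, h]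
      exact hn
  intro x y hxy
  rcases hxy.2 with h | h
  · have := key x (by rw [h]; exact hxy.1)
    rwa [h] at this
  · have := key y (by rw [h]; exact (hxy.1).symm)
    rw [h] at this
    rwa [Sym2.eq_swap] at this


section Glue
variable {V T₁ T₂ : Type} (f₁ : T₁ → T₁) (f₂ : T₂ → T₂) (r₁ : T₁) (r₂ : T₂)

open scoped Classical in
noncomputable def glueF : Option (T₁ ⊕ T₂) → Option (T₁ ⊕ T₂) := fun t =>
  match t with
  | none => none
  | some (Sum.inl x) => if x = r₁ then none else some (Sum.inl (f₁ x))
  | some (Sum.inr x) => if x = r₂ then none else some (Sum.inr (f₂ x))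

def glueD (d₁ : T₁ → ℕ) (d₂ : T₂ → ℕ) : Option (T₁ ⊕ T₂) → ℕ := fun t =>
  match t with
  | none => 0
  | some (Sum.inl x) => d₁ x + 1
  | some (Sum.inr x) => d₂ x + 1

def glueβ (β₁ : T₁ → Set V) (β₂ : T₂ → Set V) (b₀ : Set V) : Option (T₁ ⊕ T₂) → Set V :=
  fun t =>
  match t with
  | none => b₀
  | some (Sum.inl x) => β₁ x
  | some (Sum.inr x) => β₂ x

lemma glueF_none : glueF f₁ f₂ r₁ r₂ none = none := rfl

lemma glueF_inl {x : T₁} (hx : x ≠ r₁) :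
    glueF f₁ f₂ r₁ r₂ (some (Sum.inl x)) = some (Sum.inl (f₁ x)) := by
  simp only [glueF]; rw [if_neg hx]

lemma glueF_inl_root : glueF f₁ f₂ r₁ r₂ (some (Sum.inl r₁)) = none := by
  simp [glueF]

lemma glueF_inr {x : T₂} (hx : x ≠ r₂) :
    glueF f₁ f₂ r₁ r₂ (some (Sum.inr x)) = some (Sum.inr (f₂ x)) := by
  simp only [glueF]; rw [if_neg hx]

lemma glueF_inr_root : glueF f₁ f₂ r₁ r₂ (some (Sum.inr r₂)) = none := by
  simp [glueF]

lemma glueD_lt (d₁ : T₁ → ℕ) (d₂ : T₂ → ℕ)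
    (hd₁ : ∀ t, t ≠ r₁ → d₁ (f₁ t) < d₁ t) (hd₂ : ∀ t, t ≠ r₂ → d₂ (f₂ t) < d₂ t) :
    ∀ t, t ≠ (none : Option (T₁ ⊕ T₂)) →
      glueD d₁ d₂ (glueF f₁ f₂ r₁ r₂ t) < glueD d₁ d₂ t := by
  rintro (_ | (x | x)) ht
  · exact absurd rfl ht
  · by_cases hx : x = r₁
    · subst hx; rw [glueF_inl_root]; exact Nat.zero_lt_succ _
    · rw [glueF_inl f₁ f₂ r₁ r₂ hx]; exact Nat.add_lt_add_right (hd₁ x hx) 1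
  · by_cases hx : x = r₂
    · subst hx; rw [glueF_inr_root]; exact Nat.zero_lt_succ _
    · rw [glueF_inr f₁ f₂ r₁ r₂ hx]; exact Nat.add_lt_add_right (hd₂ x hx) 1

lemma glue_adj_inl (hfr₁ : f₁ r₁ = r₁) {x y : T₁} (h : (ptree f₁).Adj x y) :
    (ptree (glueF f₁ f₂ r₁ r₂)).Adj (some (Sum.inl x)) (some (Sum.inl y)) := by
  obtain ⟨hne, h | h⟩ := h
  · have hx : x ≠ r₁ := by rintro rfl; rw [hfr₁] at h; exact hne h
    exact ⟨by simpa using hne, Or.inl (by rw [glueF_inl f₁ f₂ r₁ r₂ hx, h])⟩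
  · have hy : y ≠ r₁ := by rintro rfl; rw [hfr₁] at h; exact hne h.symm
    exact ⟨by simpa using hne, Or.inr (by rw [glueF_inl f₁ f₂ r₁ r₂ hy, h])⟩

lemma glue_adj_inr (hfr₂ : f₂ r₂ = r₂) {x y : T₂} (h : (ptree f₂).Adj x y) :
    (ptree (glueF f₁ f₂ r₁ r₂)).Adj (some (Sum.inr x)) (some (Sum.inr y)) := by
  obtain ⟨hne, h | h⟩ := h
  · have hx : x ≠ r₂ := by rintro rfl; rw [hfr₂] at h; exact hne h
    exact ⟨by simpa using hne, Or.inl (by rw [glueF_inr f₁ f₂ r₁ r₂ hx, h])⟩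
  · have hy : y ≠ r₂ := by rintro rfl; rw [hfr₂] at h; exact hne h.symm
    exact ⟨by simpa using hne, Or.inr (by rw [glueF_inr f₁ f₂ r₁ r₂ hy, h])⟩

lemma glue_adj_root_inl : (ptree (glueF f₁ f₂ r₁ r₂)).Adj (some (Sum.inl r₁)) none :=
  ⟨by simp, Or.inl (glueF_inl_root f₁ f₂ r₁ r₂)⟩

lemma glue_adj_root_inr : (ptree (glueF f₁ f₂ r₁ r₂)).Adj (some (Sum.inr r₂)) none :=
  ⟨by simp, Or.inl (glueF_inr_root f₁ f₂ r₁ r₂)⟩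

lemma reach_map_inl (hfr₁ : f₁ r₁ = r₁) {s : Set T₁} {N : Set (Option (T₁ ⊕ T₂))}
    (hN : ∀ y : T₁, y ∈ s → some (Sum.inl y) ∈ N) {x y : T₁} (hx : x ∈ s) (hy : y ∈ s)
    (hr : ((ptree f₁).induce s).Reachable ⟨x, hx⟩ ⟨y, hy⟩) :
    ((ptree (glueF f₁ f₂ r₁ r₂)).induce N).Reachable
      ⟨some (Sum.inl x), hN x hx⟩ ⟨some (Sum.inl y), hN y hy⟩ := by
  let φ : ((ptree f₁).induce s) →g ((ptree (glueF f₁ f₂ r₁ r₂)).induce N) :=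
    ⟨fun p => ⟨some (Sum.inl p.1), hN p.1 p.2⟩,
     fun h => glue_adj_inl f₁ f₂ r₁ r₂ hfr₁ h⟩
  exact hr.map φ

lemma reach_map_inr (hfr₂ : f₂ r₂ = r₂) {s : Set T₂} {N : Set (Option (T₁ ⊕ T₂))}
    (hN : ∀ y : T₂, y ∈ s → some (Sum.inr y) ∈ N) {x y : T₂} (hx : x ∈ s) (hy : y ∈ s)
    (hr : ((ptree f₂).induce s).Reachable ⟨x, hx⟩ ⟨y, hy⟩) :
    ((ptree (glueF f₁ f₂ r₁ r₂)).induce N).Reachable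
      ⟨some (Sum.inr x), hN x hx⟩ ⟨some (Sum.inr y), hN y hy⟩ := by
  let φ : ((ptree f₂).induce s) →g ((ptree (glueF f₁ f₂ r₁ r₂)).induce N) :=
    ⟨fun p => ⟨some (Sum.inr p.1), hN p.1 p.2⟩,
     fun h => glue_adj_inr f₁ f₂ r₁ r₂ hfr₂ h⟩
  exact hr.map φ

end Glue
section Main
variable {V : Type} [Fintype V] (G : SimpleGraph V) (q k : ℕ)

lemma exists_ptd
    (hsep : ∀ X : Set V, X.ncard = q → ∃ A B : Set V, IsSeparation G A B ∧
      (A ∩ B).ncard ≤ k ∧ (X ∩ (A \ B)).ncard + k + 1 ≤ q ∧ (X ∩ (B \ A)).ncard + k + 1 ≤ q) :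
    ∀ (n : ℕ) (U S : Set V), (q + 1) * U.ncard + S.ncard ≤ n → Disjoint U S → S.ncard ≤ q →
    (∀ a ∈ U, ∀ b, b ∉ U ∪ S → ¬ G.Adj a b) →
    ∃ (T : Type) (f : T → T) (r : T) (d : T → ℕ) (β : T → Set V),
      f r = r ∧ (∀ t, t ≠ r → d (f t) < d t) ∧
      S ⊆ β r ∧ (⋃ t, β t) = U ∪ S ∧
      (∀ a b, G.Adj a b → a ∈ U → ∃ t, a ∈ β t ∧ b ∈ β t) ∧
      (∀ a, a ∈ U ∪ S → ((ptree f).induce {t | a ∈ β t}).Connected) ∧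
      (∀ t, (β t).ncard ≤ q + k) := by
  intro n
  induction n using Nat.strong_induction_on with
  | _ n IH =>
  intro U S hμ hdisj hS hedges
  classical
  by_cases hbase : U.ncard + S.ncard ≤ q + k
  · -- base case : single bag U ∪ S
    refine ⟨PUnit, id, PUnit.unit, fun _ => 0, fun _ => U ∪ S, rfl, ?_, ?_, ?_, ?_, ?_, ?_⟩
    · intro t ht; exact absurd rfl ht
    · exact Set.subset_union_right
    · exact Set.iUnion_const _
    · intro a b hab ha
      refine ⟨PUnit.unit, Or.inl ha, ?_⟩
      by_contra hb
      exact hedges a ha b hb hab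
    · intro a ha
      rw [SimpleGraph.connected_iff]
      refine ⟨?_, ⟨⟨PUnit.unit, ha⟩⟩⟩
      intro x y
      have : x = y := Subtype.ext (Subsingleton.elim _ _)
      rw [this]
    · intro t
      exact (Set.ncard_union_le U S).trans hbase
  · push_neg at hbase
    -- choose X with S ⊆ X ⊆ S ∪ U, |X| = q
    have hSU : (S ∪ U).ncard = S.ncard + U.ncard :=
      Set.ncard_union_eq hdisj.symm (Set.toFinite S) (Set.toFinite U)
    obtain ⟨X, hSX, hXSU, hXq⟩ :=
      Set.exists_subsuperset_card_eq (Set.subset_union_left (s := S) (t := U)) hS (by omega)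
    obtain ⟨A, B, hsepAB, hABk, hA, hB⟩ := hsep X hXq
    set Z : Set V := A ∩ B ∩ (U ∪ S) with hZ
    set U₁ : Set V := U ∩ (A \ B) with hU₁
    set U₂ : Set V := U ∩ (B \ A) with hU₂
    set S₁ : Set V := (S ∪ Z) ∩ A with hS₁
    set S₂ : Set V := (S ∪ Z) ∩ B with hS₂
    have hZk : Z.ncard ≤ k :=
      le_trans (Set.ncard_le_ncard Set.inter_subset_left (Set.toFinite _)) hABk
    have hUnotSZ : ∀ x ∈ U, x ∉ S := fun x hx hs => hdisj.le_bot ⟨hx, hs⟩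
    -- S₁ ⊆ (S ∩ (A \ B)) ∪ Z and size bound
    have hS₁sub : S₁ ⊆ (S ∩ (A \ B)) ∪ Z := by
      rintro x ⟨hx1, hx2⟩
      rcases hx1 with hxS | hxZ
      · by_cases hxB : x ∈ B
        · exact Or.inr ⟨⟨hx2, hxB⟩, Or.inr hxS⟩
        · exact Or.inl ⟨hxS, hx2, hxB⟩
      · exact Or.inr hxZ
    have hS₂sub : S₂ ⊆ (S ∩ (B \ A)) ∪ Z := by
      rintro x ⟨hx1, hx2⟩
      rcases hx1 with hxS | hxZ
      · by_cases hxA : x ∈ A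
        · exact Or.inr ⟨⟨hxA, hx2⟩, Or.inr hxS⟩
        · exact Or.inl ⟨hxS, hx2, hxA⟩
      · exact Or.inr hxZ
    have hSAX : (S ∩ (A \ B)).ncard ≤ (X ∩ (A \ B)).ncard :=
      Set.ncard_le_ncard (Set.inter_subset_inter_left _ hSX) (Set.toFinite _)
    have hSBX : (S ∩ (B \ A)).ncard ≤ (X ∩ (B \ A)).ncard :=
      Set.ncard_le_ncard (Set.inter_subset_inter_left _ hSX) (Set.toFinite _)
    have hS₁card : S₁.ncard + 1 ≤ q := by
      have h1 := Set.ncard_le_ncard hS₁sub (Set.toFinite _)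
      have h2 := Set.ncard_union_le (S ∩ (A \ B)) Z
      omega
    have hS₂card : S₂.ncard + 1 ≤ q := by
      have h1 := Set.ncard_le_ncard hS₂sub (Set.toFinite _)
      have h2 := Set.ncard_union_le (S ∩ (B \ A)) Z
      omega
    -- disjointness of children pieces
    have hdisj₁ : Disjoint U₁ S₁ := by
      rw [Set.disjoint_left]
      rintro x ⟨hxU, hxA, hxB⟩ hxS₁
      rcases hxS₁.1 with h | h
      · exact hUnotSZ x hxU h
      · exact hxB h.1.2
    have hdisj₂ : Disjoint U₂ S₂ := by
      rw [Set.disjoint_left]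
      rintro x ⟨hxU, hxB, hxA⟩ hxS₂
      rcases hxS₂.1 with h | h
      · exact hUnotSZ x hxU h
      · exact hxA h.1.1
    -- edge conditions for children
    have hunivAB : ∀ x : V, x ∈ A ∪ B := by
      intro x; rw [hsepAB.1]; trivial
    have hedges₁ : ∀ a ∈ U₁, ∀ b, b ∉ U₁ ∪ S₁ → ¬ G.Adj a b := by
      rintro a ⟨haU, haAB⟩ b hb hab
      by_cases hbUS : b ∈ U ∪ S
      · have hbA : b ∈ A := by
          rcases hunivAB b with h | h
          · exact h
          · by_cases h2 : b ∈ A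
            · exact h2
            · exact absurd hab (hsepAB.2 a haAB b ⟨h, h2⟩)
        apply hb
        by_cases hbB : b ∈ B
        · exact Or.inr ⟨Or.inr ⟨⟨hbA, hbB⟩, hbUS⟩, hbA⟩
        · rcases hbUS with h | h
          · exact Or.inl ⟨h, hbA, hbB⟩
          · exact Or.inr ⟨Or.inl h, hbA⟩
      · exact hedges a haU b hbUS hab
    have hedges₂ : ∀ a ∈ U₂, ∀ b, b ∉ U₂ ∪ S₂ → ¬ G.Adj a b := by
      rintro a ⟨haU, haBA⟩ b hb hab
      by_cases hbUS : b ∈ U ∪ S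
      · have hbB : b ∈ B := by
          rcases hunivAB b with h | h
          · by_cases h2 : b ∈ B
            · exact h2
            · exact absurd hab.symm (hsepAB.2 b ⟨h, h2⟩ a haBA)
          · exact h
        apply hb
        by_cases hbA : b ∈ A
        · exact Or.inr ⟨Or.inr ⟨⟨hbA, hbB⟩, hbUS⟩, hbB⟩
        · rcases hbUS with h | h
          · exact Or.inl ⟨h, hbB, hbA⟩
          · exact Or.inr ⟨Or.inl h, hbB⟩
      · exact hedges a haU b hbUS hab
    -- X decomposes
    have hXdecomp : X.ncard = S.ncard + (X ∩ U).ncard := by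
      have hXeq : X = S ∪ (X ∩ U) := by
        apply Set.Subset.antisymm
        · intro x hx
          rcases hXSU hx with h | h
          · exact Or.inl h
          · exact Or.inr ⟨hx, h⟩
        · rintro x (h | h)
          · exact hSX h
          · exact h.1
      rw [show X.ncard = (S ∪ (X ∩ U)).ncard from by rw [← hXeq]]
      rw [Set.ncard_union_eq (by
        rw [Set.disjoint_left]; intro x hxS hxU; exact hUnotSZ x hxU.2 hxS)
        (Set.toFinite _) (Set.toFinite _)]
    -- measure decrease
    have hμ₁ : (q + 1) * U₁.ncard + S₁.ncard < (q + 1) * U.ncard + S.ncard := by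
      by_cases hUA : U ⊆ A \ B
      · have hU₁eq : U₁ = U := by
          apply Set.Subset.antisymm Set.inter_subset_left
          intro x hx; exact ⟨hx, hUA hx⟩
        have hsub : (X ∩ U) ∪ (S ∩ (A \ B)) ⊆ X ∩ (A \ B) := by
          rintro x (⟨h1, h2⟩ | ⟨h1, h2⟩)
          · exact ⟨h1, hUA h2⟩
          · exact ⟨hSX h1, h2⟩
        have hcard : (X ∩ U).ncard + (S ∩ (A \ B)).ncard ≤ (X ∩ (A \ B)).ncard := by
          rw [← Set.ncard_union_eq (by
            rw [Set.disjoint_left]; rintro x ⟨_, hxU⟩ ⟨hxS, _⟩; exact hUnotSZ x hxU hxS)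
            (Set.toFinite _) (Set.toFinite _)]
          exact Set.ncard_le_ncard hsub (Set.toFinite _)
        have h1 := Set.ncard_le_ncard hS₁sub (Set.toFinite _)
        have h2 := Set.ncard_union_le (S ∩ (A \ B)) Z
        rw [hU₁eq]
        omega
      · obtain ⟨u, huU, huAB⟩ := Set.not_subset.mp hUA
        have hlt : U₁.ncard < U.ncard :=
          Set.ncard_lt_ncard ⟨Set.inter_subset_left, fun h => huAB (h huU).2⟩ (Set.toFinite _)
        calc (q + 1) * U₁.ncard + S₁.ncard
            < (q + 1) * U₁.ncard + (q + 1) := by omega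
          _ = (q + 1) * (U₁.ncard + 1) := by ring
          _ ≤ (q + 1) * U.ncard := Nat.mul_le_mul_left _ (by omega)
          _ ≤ (q + 1) * U.ncard + S.ncard := Nat.le_add_right _ _
    have hμ₂ : (q + 1) * U₂.ncard + S₂.ncard < (q + 1) * U.ncard + S.ncard := by
      by_cases hUB : U ⊆ B \ A
      · have hU₂eq : U₂ = U := by
          apply Set.Subset.antisymm Set.inter_subset_left
          intro x hx; exact ⟨hx, hUB hx⟩
        have hsub : (X ∩ U) ∪ (S ∩ (B \ A)) ⊆ X ∩ (B \ A) := by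
          rintro x (⟨h1, h2⟩ | ⟨h1, h2⟩)
          · exact ⟨h1, hUB h2⟩
          · exact ⟨hSX h1, h2⟩
        have hcard : (X ∩ U).ncard + (S ∩ (B \ A)).ncard ≤ (X ∩ (B \ A)).ncard := by
          rw [← Set.ncard_union_eq (by
            rw [Set.disjoint_left]; rintro x ⟨_, hxU⟩ ⟨hxS, _⟩; exact hUnotSZ x hxU hxS)
            (Set.toFinite _) (Set.toFinite _)]
          exact Set.ncard_le_ncard hsub (Set.toFinite _)
        have h1 := Set.ncard_le_ncard hS₂sub (Set.toFinite _)
        have h2 := Set.ncard_union_le (S ∩ (B \ A)) Z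
        rw [hU₂eq]
        omega
      · obtain ⟨u, huU, huBA⟩ := Set.not_subset.mp hUB
        have hlt : U₂.ncard < U.ncard :=
          Set.ncard_lt_ncard ⟨Set.inter_subset_left, fun h => huBA (h huU).2⟩ (Set.toFinite _)
        calc (q + 1) * U₂.ncard + S₂.ncard
            < (q + 1) * U₂.ncard + (q + 1) := by omega
          _ = (q + 1) * (U₂.ncard + 1) := by ring
          _ ≤ (q + 1) * U.ncard := Nat.mul_le_mul_left _ (by omega)
          _ ≤ (q + 1) * U.ncard + S.ncard := Nat.le_add_right _ _
    -- apply induction hypothesis to the two children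
    obtain ⟨T₁, f₁, r₁, d₁, β₁, hfr₁, hd₁, hroot₁, hcover₁, hedge₁, hconn₁, hsize₁⟩ :=
      IH ((q + 1) * U₁.ncard + S₁.ncard) (by omega) U₁ S₁ le_rfl hdisj₁ (by omega) hedges₁
    obtain ⟨T₂, f₂, r₂, d₂, β₂, hfr₂, hd₂, hroot₂, hcover₂, hedge₂, hconn₂, hsize₂⟩ :=
      IH ((q + 1) * U₂.ncard + S₂.ncard) (by omega) U₂ S₂ le_rfl hdisj₂ (by omega) hedges₂
    have hbag₁ : ∀ x, β₁ x ⊆ U₁ ∪ S₁ := by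
      intro x; rw [← hcover₁]; exact Set.subset_iUnion β₁ x
    have hbag₂ : ∀ x, β₂ x ⊆ U₂ ∪ S₂ := by
      intro x; rw [← hcover₂]; exact Set.subset_iUnion β₂ x
    -- facts about membership in U₁ / U₂ versus S ∪ Z
    have hU₁SZ : ∀ x ∈ U₁, x ∉ S ∪ Z := by
      rintro x ⟨hxU, hxA, hxB⟩ (h | h)
      · exact hUnotSZ x hxU h
      · exact hxB h.1.2
    have hU₂SZ : ∀ x ∈ U₂, x ∉ S ∪ Z := by
      rintro x ⟨hxU, hxB, hxA⟩ (h | h)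
      · exact hUnotSZ x hxU h
      · exact hxA h.1.1
    -- glue
    refine ⟨Option (T₁ ⊕ T₂), glueF f₁ f₂ r₁ r₂, none, glueD d₁ d₂,
      glueβ β₁ β₂ (S ∪ Z), rfl, glueD_lt f₁ f₂ r₁ r₂ d₁ d₂ hd₁ hd₂, ?_, ?_, ?_, ?_, ?_⟩
    · exact fun x hx => Or.inl hx
    · -- covering
      apply Set.Subset.antisymm
      · intro a ha
        rw [Set.mem_iUnion] at ha
        obtain ⟨t, ht⟩ := ha
        match t with
        | none =>
          rcases (show a ∈ S ∪ Z from ht) with h | h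
          · exact Or.inr h
          · exact h.2
        | some (Sum.inl x) =>
          rcases hbag₁ x (show a ∈ β₁ x from ht) with h | h
          · exact Or.inl h.1
          · rcases h.1 with h2 | h2
            · exact Or.inr h2
            · exact h2.2
        | some (Sum.inr x) =>
          rcases hbag₂ x (show a ∈ β₂ x from ht) with h | h
          · exact Or.inl h.1
          · rcases h.1 with h2 | h2
            · exact Or.inr h2
            · exact h2.2
      · intro a ha
        rw [Set.mem_iUnion]
        rcases ha with haU | haS
        · rcases hunivAB a with hA' | hB'
          · by_cases hB2 : a ∈ B
            · exact ⟨none, Or.inr ⟨⟨hA', hB2⟩, Or.inl haU⟩⟩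
            · have : a ∈ ⋃ t, β₁ t := by
                rw [hcover₁]; exact Or.inl ⟨haU, hA', hB2⟩
              obtain ⟨x, hx⟩ := Set.mem_iUnion.mp this
              exact ⟨some (Sum.inl x), hx⟩
          · by_cases hA2 : a ∈ A
            · exact ⟨none, Or.inr ⟨⟨hA2, hB'⟩, Or.inl haU⟩⟩
            · have : a ∈ ⋃ t, β₂ t := by
                rw [hcover₂]; exact Or.inl ⟨haU, hB', hA2⟩
              obtain ⟨x, hx⟩ := Set.mem_iUnion.mp this
              exact ⟨some (Sum.inr x), hx⟩
        · exact ⟨none, Or.inl haS⟩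
    · -- edges
      intro a b hab haU
      by_cases haA : a ∈ A <;> by_cases haB : a ∈ B
      · -- a ∈ A ∩ B, hence a ∈ Z
        have haZ : a ∈ Z := ⟨⟨haA, haB⟩, Or.inl haU⟩
        have hbUS : b ∈ U ∪ S := by
          by_contra hb
          exact hedges a haU b hb hab
        by_cases hbA : b ∈ A <;> by_cases hbB : b ∈ B
        · exact ⟨none, Or.inr haZ, Or.inr ⟨⟨hbA, hbB⟩, hbUS⟩⟩
        · rcases hbUS with hbU | hbS
          · obtain ⟨t, h1, h2⟩ := hedge₁ b a hab.symm ⟨hbU, hbA, hbB⟩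
            exact ⟨some (Sum.inl t), h2, h1⟩
          · exact ⟨none, Or.inr haZ, Or.inl hbS⟩
        · rcases hbUS with hbU | hbS
          · obtain ⟨t, h1, h2⟩ := hedge₂ b a hab.symm ⟨hbU, hbB, hbA⟩
            exact ⟨some (Sum.inr t), h2, h1⟩
          · exact ⟨none, Or.inr haZ, Or.inl hbS⟩
        · exact absurd (hunivAB b) (by rintro (h | h) <;> [exact hbA h; exact hbB h])
      · obtain ⟨t, h1, h2⟩ := hedge₁ a b hab ⟨haU, haA, haB⟩
        exact ⟨some (Sum.inl t), h1, h2⟩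
      · obtain ⟨t, h1, h2⟩ := hedge₂ a b hab ⟨haU, haB, haA⟩
        exact ⟨some (Sum.inr t), h1, h2⟩
      · exact absurd (hunivAB a) (by rintro (h | h) <;> [exact haA h; exact haB h])
    · -- connectivity of the bag-sets
      intro a haUS
      by_cases haU₁ : a ∈ U₁
      · -- a only appears in the left child
        have hnone : a ∉ S ∪ Z := hU₁SZ a haU₁
        have hnot₂ : ∀ x, a ∉ β₂ x := by
          intro x hx
          rcases hbag₂ x hx with h | h
          · exact haU₁.2.2 h.2.1
          · rcases h.1 with h2 | h2
            · exact hnone (Or.inl h2)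
            · exact hnone (Or.inr h2)
        rw [SimpleGraph.connected_iff]
        constructor
        · rintro ⟨(_ | (x | x)), ht⟩ ⟨(_ | (y | y)), ht'⟩
          all_goals first
            | exact absurd ht hnone
            | exact absurd ht (hnot₂ _)
            | exact absurd ht' hnone
            | exact absurd ht' (hnot₂ _)
            | skip
          exact reach_map_inl f₁ f₂ r₁ r₂ hfr₁ (fun y hy => hy) ht ht'
            ((hconn₁ a (Or.inl haU₁)).preconnected ⟨x, ht⟩ ⟨y, ht'⟩)
        · have : a ∈ ⋃ t, β₁ t := by rw [hcover₁]; exact Or.inl haU₁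
          obtain ⟨x, hx⟩ := Set.mem_iUnion.mp this
          exact ⟨⟨some (Sum.inl x), hx⟩⟩
      · by_cases haU₂ : a ∈ U₂
        · have hnone : a ∉ S ∪ Z := hU₂SZ a haU₂
          have hnot₁ : ∀ x, a ∉ β₁ x := by
            intro x hx
            rcases hbag₁ x hx with h | h
            · exact haU₂.2.2 h.2.1
            · rcases h.1 with h2 | h2
              · exact hnone (Or.inl h2)
              · exact hnone (Or.inr h2)
          rw [SimpleGraph.connected_iff]
          constructor
          · rintro ⟨(_ | (x | x)), ht⟩ ⟨(_ | (y | y)), ht'⟩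
            all_goals first
              | exact absurd ht hnone
              | exact absurd ht (hnot₁ _)
              | exact absurd ht' hnone
              | exact absurd ht' (hnot₁ _)
              | skip
            exact reach_map_inr f₁ f₂ r₁ r₂ hfr₂ (fun y hy => hy) ht ht'
              ((hconn₂ a (Or.inl haU₂)).preconnected ⟨x, ht⟩ ⟨y, ht'⟩)
          · have : a ∈ ⋃ t, β₂ t := by rw [hcover₂]; exact Or.inl haU₂
            obtain ⟨x, hx⟩ := Set.mem_iUnion.mp this
            exact ⟨⟨some (Sum.inr x), hx⟩⟩
        · -- a belongs to the root bag
          have hanone : a ∈ S ∪ Z := by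
            rcases haUS with haU | haS
            · rcases hunivAB a with hA' | hB'
              · by_cases hB2 : a ∈ B
                · exact Or.inr ⟨⟨hA', hB2⟩, Or.inl haU⟩
                · exact absurd ⟨haU, hA', hB2⟩ haU₁
              · by_cases hA2 : a ∈ A
                · exact Or.inr ⟨⟨hA2, hB'⟩, Or.inl haU⟩
                · exact absurd ⟨haU, hB', hA2⟩ haU₂
            · exact Or.inl haS
          have key : ∀ (t : Option (T₁ ⊕ T₂)) (ht : a ∈ glueβ β₁ β₂ (S ∪ Z) t),
              ((ptree (glueF f₁ f₂ r₁ r₂)).induce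
                {t | a ∈ glueβ β₁ β₂ (S ∪ Z) t}).Reachable ⟨t, ht⟩ ⟨none, hanone⟩ := by
            rintro (_ | (x | x)) ht
            · rfl
            · have haS₁ : a ∈ S₁ := by
                rcases hbag₁ x ht with h | h
                · exact absurd h haU₁
                · exact h
              have hroot : a ∈ β₁ r₁ := hroot₁ haS₁
              have h1 := (hconn₁ a (Or.inr haS₁)).preconnected ⟨x, ht⟩ ⟨r₁, hroot⟩
              have h2 := reach_map_inl (N := {t | a ∈ glueβ β₁ β₂ (S ∪ Z) t})
                f₁ f₂ r₁ r₂ hfr₁ (fun y hy => hy) ht hroot h1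
              refine h2.trans (SimpleGraph.Adj.reachable ?_)
              exact glue_adj_root_inl f₁ f₂ r₁ r₂
            · have haS₂ : a ∈ S₂ := by
                rcases hbag₂ x ht with h | h
                · exact absurd h haU₂
                · exact h
              have hroot : a ∈ β₂ r₂ := hroot₂ haS₂
              have h1 := (hconn₂ a (Or.inr haS₂)).preconnected ⟨x, ht⟩ ⟨r₂, hroot⟩
              have h2 := reach_map_inr (N := {t | a ∈ glueβ β₁ β₂ (S ∪ Z) t})
                f₁ f₂ r₁ r₂ hfr₂ (fun y hy => hy) ht hroot h1
              refine h2.trans (SimpleGraph.Adj.reachable ?_)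
              exact glue_adj_root_inr f₁ f₂ r₁ r₂
          rw [SimpleGraph.connected_iff]
          refine ⟨?_, ⟨⟨none, hanone⟩⟩⟩
          rintro ⟨t, ht⟩ ⟨t', ht'⟩
          exact (key t ht).trans (key t' ht').symm
    · -- bag sizes
      intro t
      match t with
      | none =>
        show (S ∪ Z).ncard ≤ q + k
        have := Set.ncard_union_le S Z
        omega
      | some (Sum.inl x) => exact hsize₁ x
      | some (Sum.inr x) => exact hsize₂ x

end Main


/-- Let `k ≥ 1`, `c ≥ 2`, `q ≥ ck+1` be integers and `α = (c−1)/c`. If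
every vertex set `X` of size exactly `q` admits an `α`-balanced separation of order at
most `k`, then `tw(G) ≤ q + k − 1`. -/
theorem treewidth_of_balanced_separations (k c q : ℕ) (hk : 1 ≤ k) (hc : 2 ≤ c)
    (hq : c * k + 1 ≤ q) {V : Type} [Fintype V] (G : SimpleGraph V)
    (h : ∀ X : Set V, X.ncard = q →
      ∃ A B : Set V, IsSeparation G A B ∧ (A ∩ B).ncard ≤ k ∧
        IsBalancedFor (((c : ℝ) - 1) / (c : ℝ)) X A B) :
    treewidth G ≤ q + k - 1 := by
  classical
  have hsep : ∀ X : Set V, X.ncard = q → ∃ A B : Set V, IsSeparation G A B ∧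
      (A ∩ B).ncard ≤ k ∧ (X ∩ (A \ B)).ncard + k + 1 ≤ q ∧
      (X ∩ (B \ A)).ncard + k + 1 ≤ q := by
    intro X hX
    obtain ⟨A, B, h1, h2, h3⟩ := h X hX
    have hc0 : (0:ℝ) < (c:ℝ) := by
      have : (0:ℕ) < c := by omega
      exact_mod_cast this
    have hq' : (c:ℝ) * k + 1 ≤ q := by exact_mod_cast hq
    have key : ∀ m : ℕ, (m:ℝ) ≤ ((c:ℝ) - 1) / c * q → m + k + 1 ≤ q := by
      intro m hm
      have hmc : (m:ℝ) * c ≤ ((c:ℝ) - 1) * q := by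
        have h4 := mul_le_mul_of_nonneg_right hm hc0.le
        have h5 : ((c:ℝ) - 1) / c * q * c = ((c:ℝ) - 1) * q := by
          field_simp
        rwa [h5] at h4
      have hgoal : (m:ℝ) + k < q := by nlinarith [hmc, hq', hc0]
      have : m + k < q := by exact_mod_cast hgoal
      omega
    refine ⟨A, B, h1, h2, key _ ?_, key _ ?_⟩
    · have hb := h3.1
      rwa [hX] at hb
    · have hb := h3.2
      rwa [hX] at hb
  obtain ⟨T, f, r, d, β, hfr, hd, _, hcover, hedge, hconn, hsize⟩ :=
    exists_ptd G q k hsep ((q + 1) * (Set.univ : Set V).ncard) Set.univ ∅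
      (by simp) (by simp) (by simp) (by intro a _ b hb; simp at hb)
  apply Nat.sInf_le
  refine ⟨T, ptree f, β, ⟨ptree_isTree hfr hd, ?_, ?_⟩, ?_⟩
  · intro a b hab
    exact hedge a b hab trivial
  · intro a
    exact hconn a (by simp)
  · intro t
    have := hsize t
    omega
end

section
/- If a graph H is a minor of a graph G, then H is an induced minor of every proper subdivision of G. -/
section AuxLemmas

variable {W : Type} {S : SimpleGraph W}

/-- Transfer a walk whose support stays inside `s` to reachability in the induced graph. -/
lemma aux_reachable_induce {s : Set W} :
    ∀ {a b : W} (p : S.Walk a b), (∀ x ∈ p.support, x ∈ s) →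
      ∀ (ha : a ∈ s) (hb : b ∈ s), (S.induce s).Reachable ⟨a, ha⟩ ⟨b, hb⟩ := by
  intro a b p
  induction p with
  | nil => intro _ ha hb; rfl
  | @cons a c b h q ih =>
    intro hsupp ha hb
    have hq : ∀ x ∈ q.support, x ∈ s := fun x hx =>
      hsupp x (by simp [SimpleGraph.Walk.support_cons, hx])
    have hc : c ∈ s := hq _ q.start_mem_support
    have hadj : (S.induce s).Adj ⟨a, ha⟩ ⟨c, hc⟩ := h
    exact hadj.reachable.trans (ih hq hc hb)

/-- In a path of length at least 2, the two endpoints are not joined by an edge of the path. -/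
lemma aux_no_endpoint_edge {a b : W} (p : S.Walk a b) (hp : p.IsPath) (h2 : 2 ≤ p.length) :
    s(a, b) ∉ p.edges := by
  cases p with
  | nil => simp at h2
  | @cons _ c _ h q =>
    rw [SimpleGraph.Walk.edges_cons, List.mem_cons]
    rintro (he | he)
    · rw [Sym2.eq_iff] at he
      rcases he with ⟨-, rfl⟩ | ⟨rfl, rfl⟩
      · have hq : q.IsPath := hp.of_cons
        rw [SimpleGraph.Walk.isPath_iff_eq_nil] at hq
        subst hq
        simp at h2
      · exact S.loopless.irrefl _ h
    · rw [SimpleGraph.Walk.cons_isPath_iff] at hp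
      exact hp.2 (q.fst_mem_support_of_mem_edges he)

/-- The second vertex of a path of length at least two. -/
lemma aux_second_vertex {c a : W} (r : S.Walk c a) (hr : r.IsPath) (h2 : 2 ≤ r.length) :
    ∃ x, x ∈ r.support ∧ S.Adj c x ∧ x ≠ a ∧ x ≠ c := by
  cases r with
  | nil => simp at h2
  | @cons _ x0 _ h1 q1 =>
    refine ⟨x0, by simp, h1, ?_, fun hxc => S.loopless.irrefl c (hxc ▸ h1)⟩
    rintro rfl
    have hq1 : q1.IsPath := hr.of_cons
    rw [SimpleGraph.Walk.isPath_iff_eq_nil] at hq1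
    subst hq1
    simp at h2

/-- The far endpoint is not in the support of `takeUntil` at an earlier vertex of a path. -/
lemma aux_end_not_mem_takeUntil [DecidableEq W] {a c : W} (p : S.Walk a c) (hp : p.IsPath) {x : W}
    (hx : x ∈ p.support) (hne : x ≠ c) : c ∉ (p.takeUntil x hx).support := by
  classical
  have hnodup := hp.support_nodup
  rw [← p.take_spec hx, SimpleGraph.Walk.support_append, List.nodup_append] at hnodup
  intro hc
  refine hnodup.2.2 c hc c ?_ rfl
  have hcmem : c ∈ (p.dropUntil x hx).support := SimpleGraph.Walk.end_mem_support _
  rw [SimpleGraph.Walk.support_eq_cons, List.mem_cons] at hcmem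
  rcases hcmem with rfl | hcmem
  · exact absurd rfl hne
  · exact hcmem

end AuxLemmas
/-- If `H` is a minor of `G`, then `H` is an induced minor of every
proper subdivision of `G`. -/
theorem inducedMinor_of_properSubdivision {U V W : Type}
    (H : SimpleGraph U) (G : SimpleGraph V) (S : SimpleGraph W)
    (hm : IsMinor H G) (hs : IsProperSubdivision G S) :
    IsInducedMinor H S := by
  classical
  obtain ⟨φ, hconn, hdisj, hadj⟩ := hm
  obtain ⟨ι, P, ⟨hpath, hsymm, hbranch, hcross, hcover, hedge⟩, hlen⟩ := hs
  letI : LinearOrder U := linearOrderOfSTO (@WellOrderingRel U)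
  choose cu hcu cv hcv hG using hadj
  -- two branch sets meeting force equality of the indices
  have mem2 : ∀ {p : V} {w₁ w₂ : U}, p ∈ φ w₁ → p ∈ φ w₂ → w₁ = w₂ := by
    intro p w₁ w₂ h1 h2
    by_contra hne
    exact Set.disjoint_left.mp (hdisj _ _ hne) h1 h2
  -- the branch sets in S
  set Psi : U → Set W := fun w => {x |
    (∃ p ∈ φ w, ι p = x) ∨
    (∃ a b, ∃ h : G.Adj a b, a ∈ φ w ∧ b ∈ φ w ∧ x ∈ (P h).support ∧ x ∉ Set.range ι) ∨
    (∃ w', ∃ hA : H.Adj w w', w < w' ∧ x ∈ (P (hG w w' hA)).support ∧ x ∉ Set.range ι)}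
    with hPsi
  have memPsi : ∀ w x, x ∈ Psi w ↔
      ((∃ p ∈ φ w, ι p = x) ∨
      (∃ a b, ∃ h : G.Adj a b, a ∈ φ w ∧ b ∈ φ w ∧ x ∈ (P h).support ∧ x ∉ Set.range ι) ∨
      (∃ w', ∃ hA : H.Adj w w', w < w' ∧ x ∈ (P (hG w w' hA)).support ∧ x ∉ Set.range ι)) := by
    intro w x; rw [hPsi]; rfl
  -- same subdivision path for interior vertices
  have hsame : ∀ {a b : V} (h : G.Adj a b) {a' b' : V} (h' : G.Adj a' b') (x : W),
      x ∈ (P h).support → x ∈ (P h').support → x ∉ Set.range ι → s(a, b) = s(a', b') := by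
    intro a b h a' b' h' x hx hx' hxr
    by_contra hne
    exact hxr (hcross h h' hne x hx hx')
  -- classification of interior vertices of Psi w
  have hCL : ∀ (w : U) (x : W), x ∈ Psi w → x ∉ Set.range ι →
      ∀ (a b : V) (h : G.Adj a b), x ∈ (P h).support →
      (a ∈ φ w ∧ b ∈ φ w) ∨
      ∃ w', ∃ _hA : H.Adj w w', w < w' ∧
        ((a ∈ φ w ∧ b ∈ φ w') ∨ (b ∈ φ w ∧ a ∈ φ w')) := by
    intro w x hx hxr a b h hxs
    rw [memPsi] at hx
    rcases hx with ⟨p, _, hpx⟩ | ⟨a', b', h', ha', hb', hxs', -⟩ | ⟨w', hA, hlt, hxs', -⟩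
    · exact absurd ⟨p, hpx⟩ hxr
    · have heq := hsame h h' x hxs hxs' hxr
      rw [Sym2.eq_iff] at heq
      left
      rcases heq with ⟨rfl, rfl⟩ | ⟨rfl, rfl⟩
      · exact ⟨ha', hb'⟩
      · exact ⟨hb', ha'⟩
    · have heq := hsame h (hG w w' hA) x hxs hxs' hxr
      rw [Sym2.eq_iff] at heq
      right
      refine ⟨w', hA, hlt, ?_⟩
      rcases heq with ⟨rfl, rfl⟩ | ⟨rfl, rfl⟩
      · exact Or.inl ⟨hcu w w' hA, hcv w w' hA⟩
      · exact Or.inr ⟨hcu w w' hA, hcv w w' hA⟩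
  -- any vertex of Psi w that is not a branch vertex lies on some subdivision path
  have hOnPath : ∀ (w : U) (x : W), x ∈ Psi w → x ∉ Set.range ι →
      ∃ (a b : V) (h : G.Adj a b), x ∈ (P h).support := by
    intro w x hx hxr
    rw [memPsi] at hx
    rcases hx with ⟨p, _, hpx⟩ | ⟨a, b, h, -, -, hs', -⟩ | ⟨w', hA, -, hs', -⟩
    · exact absurd ⟨p, hpx⟩ hxr
    · exact ⟨a, b, h, hs'⟩
    · exact ⟨_, _, hG w w' hA, hs'⟩
  -- branch vertices of φ w are in Psi w
  have hιmem : ∀ (w : U) {p : V}, p ∈ φ w → ι p ∈ Psi w := by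
    intro w p hp
    rw [memPsi]
    exact Or.inl ⟨p, hp, rfl⟩
  refine ⟨Psi, ?_, ?_, ?_⟩
  · -- connectivity
    intro w
    -- supports of internal subdivision paths are inside Psi w
    have hAsub : ∀ {a b : V} (h : G.Adj a b), a ∈ φ w → b ∈ φ w →
        ∀ x ∈ (P h).support, x ∈ Psi w := by
      intro a b h ha hb x hx
      by_cases hxr : x ∈ Set.range ι
      · obtain ⟨d, rfl⟩ := hxr
        rcases hbranch h d hx with rfl | rfl
        · exact hιmem w ha
        · exact hιmem w hb
      · rw [memPsi]
        exact Or.inr (Or.inl ⟨a, b, h, ha, hb, hx, hxr⟩)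
    -- reachability along an internal subdivision path
    have hreachA : ∀ {a b : V} (h : G.Adj a b) (ha : a ∈ φ w) (hb : b ∈ φ w),
        ∀ x (hx : x ∈ (P h).support) (hx' : x ∈ Psi w),
        (S.induce (Psi w)).Reachable ⟨ι a, hιmem w ha⟩ ⟨x, hx'⟩ := by
      intro a b h ha hb x hx hx'
      exact aux_reachable_induce ((P h).takeUntil x hx)
        (fun z hz => hAsub h ha hb z ((P h).support_takeUntil_subset hx hz)) _ _
    -- reachability along an initial segment of a connector path
    have hreachC : ∀ (w' : U) (hA : H.Adj w w') (_ : w < w') (x : W)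
        (hx : x ∈ (P (hG w w' hA)).support) (hxr : x ∉ Set.range ι) (hx' : x ∈ Psi w),
        (S.induce (Psi w)).Reachable ⟨ι (cu w w' hA), hιmem w (hcu w w' hA)⟩ ⟨x, hx'⟩ := by
      intro w' hA hlt x hx hxr hx'
      have hxv : x ≠ ι (cv w w' hA) := fun hc => hxr ⟨_, hc.symm⟩
      refine aux_reachable_induce ((P (hG w w' hA)).takeUntil x hx) (fun z hz => ?_) _ _
      have hzs : z ∈ (P (hG w w' hA)).support :=
        (P (hG w w' hA)).support_takeUntil_subset hx hz
      by_cases hzr : z ∈ Set.range ι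
      · obtain ⟨d, rfl⟩ := hzr
        rcases hbranch (hG w w' hA) d hzs with rfl | rfl
        · exact hιmem w (hcu w w' hA)
        · exact absurd hz (aux_end_not_mem_takeUntil _ (hpath _) hx hxv)
      · rw [memPsi]
        exact Or.inr (Or.inr ⟨w', hA, hlt, hzs, hzr⟩)
    -- reachability between branch vertices through φ w
    have hreachB : ∀ (p q : V) (hp : p ∈ φ w) (hq : q ∈ φ w),
        (S.induce (Psi w)).Reachable ⟨ι p, hιmem w hp⟩ ⟨ι q, hιmem w hq⟩ := by
      intro p q hp hq
      obtain ⟨r⟩ := (hconn w).preconnected ⟨p, hp⟩ ⟨q, hq⟩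
      have key : ∀ {x y : ↥(φ w)} (r : (G.induce (φ w)).Walk x y),
          (S.induce (Psi w)).Reachable ⟨ι x.1, hιmem w x.2⟩ ⟨ι y.1, hιmem w y.2⟩ := by
        intro x y r
        induction r with
        | nil => rfl
        | @cons x c y h q ih =>
          have hGadj : G.Adj x.1 c.1 := h
          exact ((hreachA hGadj x.2 c.2 (ι c.1) ((P hGadj).end_mem_support)
            (hιmem w c.2))).trans ih
      exact key r
    -- every vertex of Psi w reaches a branch vertex
    have key : ∀ (x : W) (hx : x ∈ Psi w), ∃ (p : V) (hp : p ∈ φ w),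
        (S.induce (Psi w)).Reachable ⟨x, hx⟩ ⟨ι p, hιmem w hp⟩ := by
      intro x hx
      by_cases hxr : x ∈ Set.range ι
      · rw [memPsi] at hx
        rcases hx with ⟨p, hp, hpx⟩ | ⟨a, b, h, -, -, -, hc⟩ | ⟨w', hA, -, -, hc⟩
        · refine ⟨p, hp, ?_⟩
          have hxe : (⟨x, hx⟩ : ↥(Psi w)) = ⟨ι p, hιmem w hp⟩ := Subtype.ext hpx.symm
          rw [hxe]
        · exact absurd hxr hc
        · exact absurd hxr hc
      · have hx0 := hx
        rw [memPsi] at hx0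
        rcases hx0 with ⟨p, hp, hpx⟩ | ⟨a, b, h, ha, hb, hsup, -⟩ | ⟨w', hA, hlt, hsup, -⟩
        · exact absurd ⟨p, hpx⟩ hxr
        · exact ⟨a, ha, (hreachA h ha hb x hsup hx).symm⟩
        · exact ⟨cu w w' hA, hcu w w' hA, (hreachC w' hA hlt x hsup hxr hx).symm⟩
    rw [SimpleGraph.connected_iff]
    constructor
    · rintro ⟨x, hx⟩ ⟨y, hy⟩
      obtain ⟨p, hp, hrp⟩ := key x hx
      obtain ⟨q, hq, hrq⟩ := key y hy
      exact (hrp.trans (hreachB p q hp hq)).trans hrq.symm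
    · obtain ⟨⟨p, hp⟩⟩ := (hconn w).nonempty
      exact ⟨⟨ι p, hιmem w hp⟩⟩
  · -- disjointness
    intro w w' hne
    rw [Set.disjoint_left]
    intro x hx hx'
    by_cases hxr : x ∈ Set.range ι
    · have hx0 := hx; have hx0' := hx'
      rw [memPsi] at hx0 hx0'
      rcases hx0 with ⟨p, hp, hpx⟩ | ⟨_, _, _, _, _, _, hc⟩ | ⟨_, _, _, _, hc⟩
      · rcases hx0' with ⟨q, hq, hqx⟩ | ⟨_, _, _, _, _, _, hc⟩ | ⟨_, _, _, _, hc⟩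
        · have : p = q := ι.injective (hpx.trans hqx.symm)
          exact hne (mem2 hp (this ▸ hq))
        · exact hc hxr
        · exact hc hxr
      · exact hc hxr
      · exact hc hxr
    · obtain ⟨a, b, h, hsup⟩ := hOnPath w x hx hxr
      rcases hCL w x hx hxr a b h hsup with ⟨ha, hb⟩ | ⟨w₂, hA, hlt, hor⟩ <;>
        rcases hCL w' x hx' hxr a b h hsup with ⟨ha', hb'⟩ | ⟨w₃, hA', hlt', hor'⟩
      · exact hne (mem2 ha ha')
      · rcases hor' with ⟨ha', _⟩ | ⟨hb', _⟩
        · exact hne (mem2 ha ha')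
        · exact hne (mem2 hb hb')
      · rcases hor with ⟨ha, _⟩ | ⟨hb, _⟩
        · exact hne (mem2 ha ha')
        · exact hne (mem2 hb hb')
      · rcases hor with ⟨haw, hbw₂⟩ | ⟨hbw, haw₂⟩ <;>
          rcases hor' with ⟨haw', hbw₃⟩ | ⟨hbw', haw₃⟩
        · exact hne (mem2 haw haw')
        · have e1 : w = w₃ := mem2 haw haw₃
          have e2 : w₂ = w' := mem2 hbw₂ hbw'
          exact absurd (hlt.trans (e2 ▸ e1 ▸ hlt')) (lt_irrefl w)
        · have e1 : w₂ = w' := mem2 haw₂ haw'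
          have e2 : w = w₃ := mem2 hbw hbw₃
          exact absurd (hlt.trans (e1 ▸ e2 ▸ hlt')) (lt_irrefl w)
        · exact hne (mem2 hbw hbw')
  · -- adjacency characterisation
    intro w w' hne
    constructor
    · -- forward: produce an edge of S between Psi w and Psi w'
      intro hA
      -- helper producing the edge from a connector path
      have main : ∀ (w₁ w₂ : U) (hA' : H.Adj w₁ w₂), w₁ < w₂ →
          ∃ x ∈ Psi w₁, ∃ y ∈ Psi w₂, S.Adj y x := by
        intro w₁ w₂ hA' hlt
        set h := hG w₁ w₂ hA' with hh
        obtain ⟨x, hxs, hxadj, hxa, hxc⟩ := aux_second_vertex (P h).reverse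
          (hpath h).reverse (by rw [SimpleGraph.Walk.length_reverse]; exact hlen h)
        rw [SimpleGraph.Walk.support_reverse, List.mem_reverse] at hxs
        have hxr : x ∉ Set.range ι := by
          rintro ⟨d, rfl⟩
          rcases hbranch h d hxs with rfl | rfl
          · exact hxa rfl
          · exact hxc rfl
        refine ⟨x, ?_, ι (cv w₁ w₂ hA'), hιmem w₂ (hcv w₁ w₂ hA'), hxadj⟩
        rw [memPsi]
        exact Or.inr (Or.inr ⟨w₂, hA', hlt, hxs, hxr⟩)
      rcases lt_or_gt_of_ne hne with hlt | hlt
      · obtain ⟨x, hx, y, hy, hxy⟩ := main w w' hA hlt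
        exact ⟨x, hx, y, hy, hxy.symm⟩
      · obtain ⟨x, hx, y, hy, hxy⟩ := main w' w hA.symm hlt
        exact ⟨y, hy, x, hx, hxy⟩
    · -- backward: an edge of S between Psi w and Psi w' forces adjacency in H
      rintro ⟨x, hx, y, hy, hxy⟩
      obtain ⟨a, b, h, he⟩ := hedge hxy
      have hxs : x ∈ (P h).support := (P h).fst_mem_support_of_mem_edges he
      have hys : y ∈ (P h).support := (P h).snd_mem_support_of_mem_edges he
      -- a branch vertex in Psi w comes from φ w
      have hbr : ∀ (w₀ : U) (z : W), z ∈ Psi w₀ → ∀ d : V, ι d = z → d ∈ φ w₀ := by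
        intro w₀ z hz d hd
        rw [memPsi] at hz
        rcases hz with ⟨p, hp, hpz⟩ | ⟨_, _, _, _, _, _, hc⟩ | ⟨_, _, _, _, hc⟩
        · have : d = p := ι.injective (hd.trans hpz.symm)
          exact this ▸ hp
        · exact absurd ⟨d, hd⟩ hc
        · exact absurd ⟨d, hd⟩ hc
      by_cases hxr : x ∈ Set.range ι
      · by_cases hyr : y ∈ Set.range ι
        · -- both branch vertices: impossible since paths have length ≥ 2
          exfalso
          obtain ⟨p, rfl⟩ := hxr
          obtain ⟨q, rfl⟩ := hyr
          have hpab := hbranch h p hxs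
          have hqab := hbranch h q hys
          have hpq : p ≠ q := fun hc => hxy.ne (hc ▸ rfl)
          have hedge2 : s(ι a, ι b) ∈ (P h).edges := by
            rcases hpab with rfl | rfl <;> rcases hqab with rfl | rfl <;>
              first
                | exact absurd rfl hpq
                | exact he
                | (rw [Sym2.eq_swap]; exact he)
          exact aux_no_endpoint_edge (P h) (hpath h) (hlen h) hedge2
        · -- symmetric case: use y's classification with w', x a branch vertex
          obtain ⟨p, hpx⟩ := hxr
          have hpφ : p ∈ φ w := hbr w x hx p hpx
          have hpab := hbranch h p (hpx ▸ hxs)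
          rcases hCL w' y hy hyr a b h hys with ⟨ha', hb'⟩ | ⟨w₃, hA', hlt', hor'⟩
          · exfalso
            rcases hpab with rfl | rfl
            · exact hne (mem2 hpφ ha')
            · exact hne (mem2 hpφ hb')
          · rcases hor' with ⟨haw', hbw₃⟩ | ⟨hbw', haw₃⟩
            · rcases hpab with rfl | rfl
              · exact absurd (mem2 hpφ haw') hne
              · have : w₃ = w := mem2 hbw₃ hpφ
                exact (this ▸ hA').symm
            · rcases hpab with rfl | rfl
              · have : w₃ = w := mem2 haw₃ hpφ
                exact (this ▸ hA').symm
              · exact absurd (mem2 hpφ hbw') hne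
      · rcases hCL w x hx hxr a b h hxs with ⟨haw, hbw⟩ | ⟨w₂, hA, hlt, hor⟩
        · -- x interior of an internal path of φ w: contradiction
          exfalso
          by_cases hyr : y ∈ Set.range ι
          · obtain ⟨q, hqy⟩ := hyr
            have hqφ : q ∈ φ w' := hbr w' y hy q hqy
            rcases hbranch h q (hqy ▸ hys) with rfl | rfl
            · exact hne (mem2 haw hqφ)
            · exact hne (mem2 hbw hqφ)
          · rcases hCL w' y hy hyr a b h hys with ⟨ha', _⟩ | ⟨w₃, hA', hlt', hor'⟩
            · exact hne (mem2 haw ha')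
            · rcases hor' with ⟨ha', _⟩ | ⟨hb', _⟩
              · exact hne (mem2 haw ha')
              · exact hne (mem2 hbw hb')
        · -- x interior of the connector for (w, w₂)
          by_cases hyr : y ∈ Set.range ι
          · obtain ⟨q, hqy⟩ := hyr
            have hqφ : q ∈ φ w' := hbr w' y hy q hqy
            rcases hor with ⟨haw, hbw₂⟩ | ⟨hbw, haw₂⟩
            · rcases hbranch h q (hqy ▸ hys) with rfl | rfl
              · exact absurd (mem2 haw hqφ) hne
              · have : w₂ = w' := mem2 hbw₂ hqφ
                exact this ▸ hA
            · rcases hbranch h q (hqy ▸ hys) with rfl | rfl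
              · have : w₂ = w' := mem2 haw₂ hqφ
                exact this ▸ hA
              · exact absurd (mem2 hbw hqφ) hne
          · rcases hCL w' y hy hyr a b h hys with ⟨ha', hb'⟩ | ⟨w₃, hA', hlt', hor'⟩
            · rcases hor with ⟨haw, _⟩ | ⟨hbw, _⟩
              · exact absurd (mem2 haw ha') hne
              · exact absurd (mem2 hbw hb') hne
            · rcases hor with ⟨haw, hbw₂⟩ | ⟨hbw, haw₂⟩ <;>
                rcases hor' with ⟨haw', hbw₃⟩ | ⟨hbw', haw₃⟩
              · exact absurd (mem2 haw haw') hne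
              · have : w₂ = w' := mem2 hbw₂ hbw'
                exact this ▸ hA
              · have : w₂ = w' := mem2 haw₂ haw'
                exact this ▸ hA
              · exact absurd (mem2 hbw hbw') hne
end
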